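/- arXiv:2603.07555 — 3 statements merged into one kernel-verified Lean document; each statement's English description precedes it below -/
import Mathlib

section
/- Every game with no cycle of total weight zero admits a reducing potential, i.e. a potential φ : V → ℤ such that the potential-reduced game G_φ is reduced. -/
/-!
Basic definitions for mean-payoff games: games, infinite paths, positional
strategies, the valuations MP, supΣ^X and infΣ^X, values of vertices,
zones N, P, ZN, ZP (also relative to a sub-arena), reduced games,
potentials and potential reductions, traps.
-/

/-- A game: a sinkless directed graph with integer weights, whose vertices are
partitioned into Min-vertices (`IsMin`) and Max-vertices (`¬ IsMin`). -/
structure MPGame (V : Type*) where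
  E : V → V → Prop
  w : V → V → ℤ
  IsMin : V → Prop
  sinkless : ∀ v, ∃ v', E v v'

namespace MPGame

variable {V : Type*}

/-- An infinite path in a game. -/
structure Path (G : MPGame V) where
  vert : ℕ → V
  adj : ∀ i, G.E (vert i) (vert (i + 1))

/-- The sum of the weights of the first `k` edges of a path. -/
def Path.wsum {G : MPGame V} (π : G.Path) (k : ℕ) : ℤ :=
  ∑ i ∈ Finset.range k, G.w (π.vert i) (π.vert (i + 1))

/-- The tail of a path (drop the first vertex). -/
def Path.tail {G : MPGame V} (π : G.Path) : G.Path :=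
  ⟨fun i => π.vert (i + 1), fun i => π.adj (i + 1)⟩

/-- A positional strategy `σ : V → V` is legal if it always follows an edge. -/
def Legal (G : MPGame V) (σ : V → V) : Prop := ∀ v, G.E v (σ v)

/-- Consistency of a path with a positional Min-strategy. -/
def Path.ConsMin {G : MPGame V} (π : G.Path) (σ : V → V) : Prop :=
  ∀ i, G.IsMin (π.vert i) → π.vert (i + 1) = σ (π.vert i)

/-- Consistency of a path with a positional Max-strategy. -/
def Path.ConsMax {G : MPGame V} (π : G.Path) (τ : V → V) : Prop :=
  ∀ i, ¬ G.IsMin (π.vert i) → π.vert (i + 1) = τ (π.vert i)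

/-- The mean-payoff valuation `MP(π) = limsup_k (1/k) ∑_{i<k} w_i`. -/
noncomputable def MP {G : MPGame V} (π : G.Path) : EReal :=
  Filter.limsup (fun k => (((π.wsum k : ℝ) / (k : ℝ)) : EReal)) Filter.atTop

/-- `supΣ^X(π) = sup_{k ≤ n_X} ∑_{i<k} w_i`, where `n_X` is the first hitting
time of `X` (all `k` if `X` is never hit). -/
noncomputable def supSigma {G : MPGame V} (X : Set V) (π : G.Path) : EReal :=
  ⨆ k : {k : ℕ // ∀ i < k, π.vert i ∉ X}, ((π.wsum k.1 : ℝ) : EReal)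

/-- `infΣ^X(π) = inf_{k ≤ n_X} ∑_{i<k} w_i`. -/
noncomputable def infSigma {G : MPGame V} (X : Set V) (π : G.Path) : EReal :=
  ⨅ k : {k : ℕ // ∀ i < k, π.vert i ∉ X}, ((π.wsum k.1 : ℝ) : EReal)

/-- `inf_σ sup_{π ⊨ σ, π from v} val(π)`, over legal positional Min-strategies. -/
noncomputable def minVal (G : MPGame V) (val : G.Path → EReal) (v : V) : EReal :=
  ⨅ σ : {σ : V → V // G.Legal σ},
    ⨆ π : {π : G.Path // π.vert 0 = v ∧ π.ConsMin σ.1}, val π.1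

/-- `sup_τ inf_{π ⊨ τ, π from v} val(π)`, over legal positional Max-strategies. -/
noncomputable def maxVal (G : MPGame V) (val : G.Path → EReal) (v : V) : EReal :=
  ⨆ τ : {τ : V → V // G.Legal τ},
    ⨅ π : {π : G.Path // π.vert 0 = v ∧ π.ConsMax τ.1}, val π.1

/-- The MP-value of a vertex. -/
noncomputable def MPval (G : MPGame V) (v : V) : EReal := G.minVal MP v

/-- The `supΣ^X`-value of a vertex. -/
noncomputable def supSigmaVal (G : MPGame V) (X : Set V) (v : V) : EReal :=
  G.minVal (supSigma X) v

/-- The `infΣ^X`-value of a vertex. -/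
noncomputable def infSigmaVal (G : MPGame V) (X : Set V) (v : V) : EReal :=
  G.minVal (infSigma X) v

/-- `G` has no cycle of total weight zero: no path repeats a vertex with the
same partial sum of weights. -/
def NoZeroCycle (G : MPGame V) : Prop :=
  ∀ (π : G.Path) (i j : ℕ), i < j → π.vert i = π.vert j → π.wsum i ≠ π.wsum j

/-- The zone `N` of the subgame of `G` induced on `D`: vertices whose
immediately optimal edges (within `D`) have weight `< 0`. -/
def NsetOn (G : MPGame V) (D : Set V) : Set V :=
  {v | v ∈ D ∧ ((G.IsMin v ∧ ∃ v' ∈ D, G.E v v' ∧ G.w v v' < 0) ∨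
      (¬ G.IsMin v ∧ ∀ v' ∈ D, G.E v v' → G.w v v' < 0))}

/-- The zone `P` of the subgame of `G` induced on `D`. -/
def PsetOn (G : MPGame V) (D : Set V) : Set V :=
  {v | v ∈ D ∧ ((¬ G.IsMin v ∧ ∃ v' ∈ D, G.E v v' ∧ 0 < G.w v v') ∨
      (G.IsMin v ∧ ∀ v' ∈ D, G.E v v' → 0 < G.w v v'))}

/-- The zone `N` of `G`. -/
def Nset (G : MPGame V) : Set V := G.NsetOn Set.univ

/-- The zone `P` of `G`. -/
def Pset (G : MPGame V) : Set V := G.PsetOn Set.univ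

/-- The zone `ZN` of the subgame of `G` induced on `D`: vertices from which
Min can force that an edge of weight `< 0` is visited before any edge of
weight `> 0` (staying within `D`). -/
inductive ZNr (G : MPGame V) (D : Set V) : V → Prop
  | minNeg (v v' : V) : v ∈ D → G.IsMin v → v' ∈ D → G.E v v' → G.w v v' < 0 →
      ZNr G D v
  | minZero (v v' : V) : v ∈ D → G.IsMin v → v' ∈ D → G.E v v' → G.w v v' = 0 →
      ZNr G D v' → ZNr G D v
  | max (v : V) : v ∈ D → ¬ G.IsMin v →
      (∀ v' ∈ D, G.E v v' → G.w v v' ≤ 0) →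
      (∀ v', v' ∈ D → G.E v v' → G.w v v' = 0 → ZNr G D v') →
      ZNr G D v

/-- The zone `ZP` of the subgame of `G` induced on `D`. -/
inductive ZPr (G : MPGame V) (D : Set V) : V → Prop
  | maxPos (v v' : V) : v ∈ D → ¬ G.IsMin v → v' ∈ D → G.E v v' → 0 < G.w v v' →
      ZPr G D v
  | maxZero (v v' : V) : v ∈ D → ¬ G.IsMin v → v' ∈ D → G.E v v' → G.w v v' = 0 →
      ZPr G D v' → ZPr G D v
  | min (v : V) : v ∈ D → G.IsMin v →
      (∀ v' ∈ D, G.E v v' → 0 ≤ G.w v v') →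
      (∀ v', v' ∈ D → G.E v v' → G.w v v' = 0 → ZPr G D v') →
      ZPr G D v

/-- The zone `ZN` of `G`. -/
def ZN (G : MPGame V) : V → Prop := G.ZNr Set.univ

/-- The zone `ZP` of `G`. -/
def ZP (G : MPGame V) : V → Prop := G.ZPr Set.univ

/-- The subgame of `G` induced on `D` is reduced: from every vertex of `ZN`,
Min can force that the first edge visited has weight `≤ 0` and leads into
`ZN`, and symmetrically for `ZP` and Max. -/
def ReducedOn (G : MPGame V) (D : Set V) : Prop :=
  (∀ v, G.ZNr D v →
     (G.IsMin v → ∃ v' ∈ D, G.E v v' ∧ G.w v v' ≤ 0 ∧ G.ZNr D v') ∧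
     (¬ G.IsMin v → ∀ v' ∈ D, G.E v v' → G.w v v' ≤ 0 ∧ G.ZNr D v')) ∧
  (∀ v, G.ZPr D v →
     (¬ G.IsMin v → ∃ v' ∈ D, G.E v v' ∧ 0 ≤ G.w v v' ∧ G.ZPr D v') ∧
     (G.IsMin v → ∀ v' ∈ D, G.E v v' → 0 ≤ G.w v v' ∧ G.ZPr D v'))

/-- `G` is reduced. -/
def Reduced (G : MPGame V) : Prop := G.ReducedOn Set.univ

/-- The subgame of `G` induced on `D` is positively reduced: `ZN = ∅`. -/
def PosReducedOn (G : MPGame V) (D : Set V) : Prop := ∀ v, ¬ G.ZNr D v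

/-- `A` is a trap for Min: a sinkless subgraph from which Min cannot escape. -/
def TrapForMin (G : MPGame V) (A : Set V) : Prop :=
  (∀ v ∈ A, ∃ v' ∈ A, G.E v v') ∧
  ∀ v ∈ A, G.IsMin v → ∀ v', G.E v v' → v' ∈ A

/-- `A` is a trap for Max: a sinkless subgraph from which Max cannot escape. -/
def TrapForMax (G : MPGame V) (A : Set V) : Prop :=
  (∀ v ∈ A, ∃ v' ∈ A, G.E v v') ∧
  ∀ v ∈ A, ¬ G.IsMin v → ∀ v', G.E v v' → v' ∈ A

/-- The potential reduction of `G` by the potential `φ`. -/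
def pot (G : MPGame V) (φ : V → ℤ) : MPGame V where
  E := G.E
  w := fun v v' => G.w v v' + φ v' - φ v
  IsMin := G.IsMin
  sinkless := G.sinkless

end MPGame

namespace MPAux

open Classical MPGame

variable {V : Type*}

/-- shifted weight -/
def wp (G : MPGame V) (φ : V → ℤ) (a b : V) : ℤ := G.w a b + φ b - φ a

/-- positive certificate relative to edge set `E'` -/
def PC (G : MPGame V) (E' : V → V → Prop) (B : Set V) (φ : V → ℤ) : Prop :=
  ∀ v ∈ B, (∃ t, E' v t) ∧
    (G.IsMin v → ∀ t, E' v t → 0 ≤ wp G φ v t ∧ t ∈ B) ∧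
    (¬ G.IsMin v → ∃ t, E' v t ∧ 0 ≤ wp G φ v t ∧ t ∈ B)

/-- negative certificate relative to edge set `E'` -/
def NC (G : MPGame V) (E' : V → V → Prop) (A : Set V) (φ : V → ℤ) : Prop :=
  ∀ v ∈ A, (∃ t, E' v t) ∧
    (G.IsMin v → ∃ t, E' v t ∧ wp G φ v t ≤ 0 ∧ t ∈ A) ∧
    (¬ G.IsMin v → ∀ t, E' v t → wp G φ v t ≤ 0 ∧ t ∈ A)

def Arena (G : MPGame V) (E' : V → V → Prop) : Prop :=
  (∀ a b, E' a b → G.E a b) ∧ (∀ a b, E' a b → ∃ c, E' b c)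

def Dom (E' : V → V → Prop) : Set V := {v | ∃ t, E' v t}

lemma PC_subset_dom {G : MPGame V} {E' B φ} (h : PC G E' B φ) : B ⊆ Dom E' :=
  fun v hv => (h v hv).1

lemma NC_subset_dom {G : MPGame V} {E' A φ} (h : NC G E' A φ) : A ⊆ Dom E' :=
  fun v hv => (h v hv).1

/-- gluing two positive certificates -/
lemma PC_union {G : MPGame V} {E' : V → V → Prop} {B₁ B₂ : Set V} {φ₁ φ₂ : V → ℤ}
    (h₁ : PC G E' B₁ φ₁) (h₂ : PC G E' B₂ φ₂) :
    ∃ φ, PC G E' (B₁ ∪ B₂) φ := by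
  classical
  refine ⟨fun v => if v ∈ B₁ then (if v ∈ B₂ then max (φ₁ v) (φ₂ v) else φ₁ v) else φ₂ v, ?_⟩
  set φ : V → ℤ := fun v => if v ∈ B₁ then (if v ∈ B₂ then max (φ₁ v) (φ₂ v) else φ₁ v) else φ₂ v
    with hφ
  have key1 : ∀ v ∈ B₁, φ₁ v ≤ φ v := by
    intro v hv; show φ₁ v ≤ if v ∈ B₁ then (if v ∈ B₂ then max (φ₁ v) (φ₂ v) else φ₁ v) else φ₂ v
    rw [if_pos hv]; split
    · exact le_max_left _ _
    · exact le_rfl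
  have key2 : ∀ v ∈ B₂, φ₂ v ≤ φ v := by
    intro v hv; show φ₂ v ≤ if v ∈ B₁ then (if v ∈ B₂ then max (φ₁ v) (φ₂ v) else φ₁ v) else φ₂ v
    by_cases h1 : v ∈ B₁
    · rw [if_pos h1, if_pos hv]; exact le_max_right _ _
    · rw [if_neg h1]
  have key3 : ∀ v ∈ B₁ ∪ B₂, (v ∈ B₁ ∧ φ v = φ₁ v) ∨ (v ∈ B₂ ∧ φ v = φ₂ v) := by
    intro v hv
    rcases hv with hv | hv
    · simp only [hφ, if_pos hv]
      by_cases h2 : v ∈ B₂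
      · rw [if_pos h2]
        rcases max_cases (φ₁ v) (φ₂ v) with ⟨he, _⟩ | ⟨he, _⟩
        · exact Or.inl ⟨hv, he⟩
        · exact Or.inr ⟨h2, he⟩
      · rw [if_neg h2]; exact Or.inl ⟨hv, rfl⟩
    · by_cases h1 : v ∈ B₁
      · simp only [hφ, if_pos h1, if_pos hv]
        rcases max_cases (φ₁ v) (φ₂ v) with ⟨he, _⟩ | ⟨he, _⟩
        · exact Or.inl ⟨h1, he⟩
        · exact Or.inr ⟨hv, he⟩
      · exact Or.inr ⟨hv, if_neg h1⟩
  intro v hv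
  rcases key3 v hv with ⟨hvB, hvφ⟩ | ⟨hvB, hvφ⟩
  · obtain ⟨hdom, hmin, hmax⟩ := h₁ v hvB
    refine ⟨hdom, ?_, ?_⟩
    · intro hm t ht
      obtain ⟨hw, htB⟩ := hmin hm t ht
      refine ⟨?_, Or.inl htB⟩
      have := key1 t htB
      simp only [wp] at hw ⊢; omega
    · intro hm
      obtain ⟨t, ht, hw, htB⟩ := hmax hm
      refine ⟨t, ht, ?_, Or.inl htB⟩
      have := key1 t htB
      simp only [wp] at hw ⊢; omega
  · obtain ⟨hdom, hmin, hmax⟩ := h₂ v hvB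
    refine ⟨hdom, ?_, ?_⟩
    · intro hm t ht
      obtain ⟨hw, htB⟩ := hmin hm t ht
      refine ⟨?_, Or.inr htB⟩
      have := key2 t htB
      simp only [wp] at hw ⊢; omega
    · intro hm
      obtain ⟨t, ht, hw, htB⟩ := hmax hm
      refine ⟨t, ht, ?_, Or.inr htB⟩
      have := key2 t htB
      simp only [wp] at hw ⊢; omega

/-- gluing two negative certificates -/
lemma NC_union {G : MPGame V} {E' : V → V → Prop} {A₁ A₂ : Set V} {φ₁ φ₂ : V → ℤ}
    (h₁ : NC G E' A₁ φ₁) (h₂ : NC G E' A₂ φ₂) :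
    ∃ φ, NC G E' (A₁ ∪ A₂) φ := by
  classical
  refine ⟨fun v => if v ∈ A₁ then (if v ∈ A₂ then min (φ₁ v) (φ₂ v) else φ₁ v) else φ₂ v, ?_⟩
  set φ : V → ℤ := fun v => if v ∈ A₁ then (if v ∈ A₂ then min (φ₁ v) (φ₂ v) else φ₁ v) else φ₂ v
    with hφ
  have key1 : ∀ v ∈ A₁, φ v ≤ φ₁ v := by
    intro v hv; show (if v ∈ A₁ then (if v ∈ A₂ then min (φ₁ v) (φ₂ v) else φ₁ v) else φ₂ v) ≤ φ₁ v
    rw [if_pos hv]; split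
    · exact min_le_left _ _
    · exact le_rfl
  have key2 : ∀ v ∈ A₂, φ v ≤ φ₂ v := by
    intro v hv; show (if v ∈ A₁ then (if v ∈ A₂ then min (φ₁ v) (φ₂ v) else φ₁ v) else φ₂ v) ≤ φ₂ v
    by_cases h1 : v ∈ A₁
    · rw [if_pos h1, if_pos hv]; exact min_le_right _ _
    · rw [if_neg h1]
  have key3 : ∀ v ∈ A₁ ∪ A₂, (v ∈ A₁ ∧ φ v = φ₁ v) ∨ (v ∈ A₂ ∧ φ v = φ₂ v) := by
    intro v hv
    rcases hv with hv | hv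
    · simp only [hφ, if_pos hv]
      by_cases h2 : v ∈ A₂
      · rw [if_pos h2]
        rcases min_cases (φ₁ v) (φ₂ v) with ⟨he, _⟩ | ⟨he, _⟩
        · exact Or.inl ⟨hv, he⟩
        · exact Or.inr ⟨h2, he⟩
      · rw [if_neg h2]; exact Or.inl ⟨hv, rfl⟩
    · by_cases h1 : v ∈ A₁
      · simp only [hφ, if_pos h1, if_pos hv]
        rcases min_cases (φ₁ v) (φ₂ v) with ⟨he, _⟩ | ⟨he, _⟩
        · exact Or.inl ⟨h1, he⟩
        · exact Or.inr ⟨hv, he⟩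
      · exact Or.inr ⟨hv, if_neg h1⟩
  intro v hv
  rcases key3 v hv with ⟨hvA, hvφ⟩ | ⟨hvA, hvφ⟩
  · obtain ⟨hdom, hmin, hmax⟩ := h₁ v hvA
    refine ⟨hdom, ?_, ?_⟩
    · intro hm
      obtain ⟨t, ht, hw, htA⟩ := hmin hm
      refine ⟨t, ht, ?_, Or.inl htA⟩
      have := key1 t htA
      simp only [wp] at hw ⊢; omega
    · intro hm t ht
      obtain ⟨hw, htA⟩ := hmax hm t ht
      refine ⟨?_, Or.inl htA⟩
      have := key1 t htA
      simp only [wp] at hw ⊢; omega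
  · obtain ⟨hdom, hmin, hmax⟩ := h₂ v hvA
    refine ⟨hdom, ?_, ?_⟩
    · intro hm
      obtain ⟨t, ht, hw, htA⟩ := hmin hm
      refine ⟨t, ht, ?_, Or.inr htA⟩
      have := key2 t htA
      simp only [wp] at hw ⊢; omega
    · intro hm t ht
      obtain ⟨hw, htA⟩ := hmax hm t ht
      refine ⟨?_, Or.inr htA⟩
      have := key2 t htA
      simp only [wp] at hw ⊢; omega

/-- certificates are invariant under shifting the potential by a constant -/
lemma PC_shift {G : MPGame V} {E' B φ} (h : PC G E' B φ) (c : ℤ) :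
    PC G E' B (fun v => φ v + c) := by
  intro v hv
  obtain ⟨hdom, hmin, hmax⟩ := h v hv
  refine ⟨hdom, ?_, ?_⟩
  · intro hm t ht
    obtain ⟨hw, htB⟩ := hmin hm t ht
    exact ⟨by simp only [wp] at hw ⊢; omega, htB⟩
  · intro hm
    obtain ⟨t, ht, hw, htB⟩ := hmax hm
    exact ⟨t, ht, by simp only [wp] at hw ⊢; omega, htB⟩

lemma NC_shift {G : MPGame V} {E' A φ} (h : NC G E' A φ) (c : ℤ) :
    NC G E' A (fun v => φ v + c) := by
  intro v hv
  obtain ⟨hdom, hmin, hmax⟩ := h v hv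
  refine ⟨hdom, ?_, ?_⟩
  · intro hm
    obtain ⟨t, ht, hw, htA⟩ := hmin hm
    exact ⟨t, ht, by simp only [wp] at hw ⊢; omega, htA⟩
  · intro hm t ht
    obtain ⟨hw, htA⟩ := hmax hm t ht
    exact ⟨by simp only [wp] at hw ⊢; omega, htA⟩

/-- a positive certificate transfers to a larger edge relation, provided
Min-edges do not increase on the certified set -/
lemma PC_mono {G : MPGame V} {E₁ E₂ : V → V → Prop} {B φ}
    (hsub : ∀ a b, E₁ a b → E₂ a b)
    (hmin : ∀ v ∈ B, G.IsMin v → ∀ t, E₂ v t → E₁ v t)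
    (h : PC G E₁ B φ) : PC G E₂ B φ := by
  intro v hv
  obtain ⟨hdom, hmn, hmx⟩ := h v hv
  refine ⟨⟨_, hsub _ _ hdom.choose_spec⟩, ?_, ?_⟩
  · intro hm t ht
    exact hmn hm t (hmin v hv hm t ht)
  · intro hm
    obtain ⟨t, ht, hw, htB⟩ := hmx hm
    exact ⟨t, hsub _ _ ht, hw, htB⟩

lemma NC_mono {G : MPGame V} {E₁ E₂ : V → V → Prop} {A φ}
    (hsub : ∀ a b, E₁ a b → E₂ a b)
    (hmax : ∀ v ∈ A, ¬ G.IsMin v → ∀ t, E₂ v t → E₁ v t)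
    (h : NC G E₁ A φ) : NC G E₂ A φ := by
  intro v hv
  obtain ⟨hdom, hmn, hmx⟩ := h v hv
  refine ⟨⟨_, hsub _ _ hdom.choose_spec⟩, ?_, ?_⟩
  · intro hm
    obtain ⟨t, ht, hw, htA⟩ := hmn hm
    exact ⟨t, hsub _ _ ht, hw, htA⟩
  · intro hm t ht
    exact hmx hm t (hmax v hv hm t ht)

/-- extending a positive certificate by a Max vertex with an edge into it -/
lemma PC_ext_max {G : MPGame V} {E' B φ} (h : PC G E' B φ) {v t : V}
    (hmin : ¬ G.IsMin v) (ht : E' v t) (htB : t ∈ B) (hv : v ∉ B) :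
    PC G E' (insert v B) (Function.update φ v (G.w v t + φ t)) := by
  classical
  have hupd : ∀ u ∈ B, Function.update φ v (G.w v t + φ t) u = φ u := by
    intro u hu; exact Function.update_of_ne (by rintro rfl; exact hv hu) _ _
  intro u hu
  rcases hu with rfl | hu
  · refine ⟨⟨t, ht⟩, fun hm => absurd hm hmin, fun _ => ⟨t, ht, ?_, Or.inr htB⟩⟩
    simp only [wp, Function.update_self, hupd t htB]; omega
  · obtain ⟨hdom, hmn, hmx⟩ := h u hu
    refine ⟨hdom, ?_, ?_⟩
    · intro hm s hs
      obtain ⟨hw, hsB⟩ := hmn hm s hs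
      refine ⟨?_, Or.inr hsB⟩
      simp only [wp] at hw ⊢
      rw [hupd u hu, hupd s hsB]; exact hw
    · intro hm
      obtain ⟨s, hs, hw, hsB⟩ := hmx hm
      refine ⟨s, hs, ?_, Or.inr hsB⟩
      simp only [wp] at hw ⊢
      rw [hupd u hu, hupd s hsB]; exact hw

/-- extending a positive certificate by a Min vertex all of whose edges enter it -/
lemma PC_ext_min [Fintype V] {G : MPGame V} {E' B φ} (h : PC G E' B φ) {v : V}
    (hmin : G.IsMin v) (hdomv : ∃ t, E' v t) (hall : ∀ t, E' v t → t ∈ B) (hv : v ∉ B) :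
    ∃ φ', PC G E' (insert v B) φ' := by
  classical
  obtain ⟨t₀, ht₀⟩ := hdomv
  set s : Finset V := Finset.univ.filter (fun t => E' v t) with hs
  have hsne : s.Nonempty := ⟨t₀, by simp [hs, ht₀]⟩
  set m : ℤ := s.inf' hsne (fun t => G.w v t + φ t) with hm
  refine ⟨Function.update φ v m, ?_⟩
  have hupd : ∀ u ∈ B, Function.update φ v m u = φ u := by
    intro u hu; exact Function.update_of_ne (by rintro rfl; exact hv hu) _ _
  intro u hu
  rcases hu with rfl | hu
  · refine ⟨⟨t₀, ht₀⟩, ?_, fun hmm => absurd hmin hmm⟩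
    intro _ t ht
    refine ⟨?_, Or.inr (hall t ht)⟩
    have hts : t ∈ s := by simp [hs, ht]
    have : m ≤ G.w u t + φ t := Finset.inf'_le _ hts
    simp only [wp, Function.update_self, hupd t (hall t ht)]; omega
  · obtain ⟨hdom, hmn, hmx⟩ := h u hu
    refine ⟨hdom, ?_, ?_⟩
    · intro hm2 s2 hs2
      obtain ⟨hw, hsB⟩ := hmn hm2 s2 hs2
      refine ⟨?_, Or.inr hsB⟩
      simp only [wp] at hw ⊢
      rw [hupd u hu, hupd s2 hsB]; exact hw
    · intro hm2
      obtain ⟨s2, hs2, hw, hsB⟩ := hmx hm2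
      refine ⟨s2, hs2, ?_, Or.inr hsB⟩
      simp only [wp] at hw ⊢
      rw [hupd u hu, hupd s2 hsB]; exact hw

/-- extending a negative certificate by a Min vertex with an edge into it -/
lemma NC_ext_min {G : MPGame V} {E' A φ} (h : NC G E' A φ) {v t : V}
    (hmin : G.IsMin v) (ht : E' v t) (htA : t ∈ A) (hv : v ∉ A) :
    NC G E' (insert v A) (Function.update φ v (G.w v t + φ t)) := by
  classical
  have hupd : ∀ u ∈ A, Function.update φ v (G.w v t + φ t) u = φ u := by
    intro u hu; exact Function.update_of_ne (by rintro rfl; exact hv hu) _ _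
  intro u hu
  rcases hu with rfl | hu
  · refine ⟨⟨t, ht⟩, fun _ => ⟨t, ht, ?_, Or.inr htA⟩, fun hm => absurd hmin hm⟩
    simp only [wp, Function.update_self, hupd t htA]; omega
  · obtain ⟨hdom, hmn, hmx⟩ := h u hu
    refine ⟨hdom, ?_, ?_⟩
    · intro hm
      obtain ⟨s, hs, hw, hsA⟩ := hmn hm
      refine ⟨s, hs, ?_, Or.inr hsA⟩
      simp only [wp] at hw ⊢
      rw [hupd u hu, hupd s hsA]; exact hw
    · intro hm s hs
      obtain ⟨hw, hsA⟩ := hmx hm s hs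
      refine ⟨?_, Or.inr hsA⟩
      simp only [wp] at hw ⊢
      rw [hupd u hu, hupd s hsA]; exact hw

/-- extending a negative certificate by a Max vertex all of whose edges enter it -/
lemma NC_ext_max [Fintype V] {G : MPGame V} {E' A φ} (h : NC G E' A φ) {v : V}
    (hmin : ¬ G.IsMin v) (hdomv : ∃ t, E' v t) (hall : ∀ t, E' v t → t ∈ A) (hv : v ∉ A) :
    ∃ φ', NC G E' (insert v A) φ' := by
  classical
  obtain ⟨t₀, ht₀⟩ := hdomv
  set s : Finset V := Finset.univ.filter (fun t => E' v t) with hs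
  have hsne : s.Nonempty := ⟨t₀, by simp [hs, ht₀]⟩
  set m : ℤ := s.sup' hsne (fun t => G.w v t + φ t) with hm
  refine ⟨Function.update φ v m, ?_⟩
  have hupd : ∀ u ∈ A, Function.update φ v m u = φ u := by
    intro u hu; exact Function.update_of_ne (by rintro rfl; exact hv hu) _ _
  intro u hu
  rcases hu with rfl | hu
  · refine ⟨⟨t₀, ht₀⟩, fun hmm => absurd hmm hmin, ?_⟩
    intro _ t ht
    refine ⟨?_, Or.inr (hall t ht)⟩
    have hts : t ∈ s := by simp [hs, ht]
    have : G.w u t + φ t ≤ m := Finset.le_sup' (fun t => G.w u t + φ t) hts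
    simp only [wp, Function.update_self, hupd t (hall t ht)]; omega
  · obtain ⟨hdom, hmn, hmx⟩ := h u hu
    refine ⟨hdom, ?_, ?_⟩
    · intro hm2
      obtain ⟨s2, hs2, hw, hsA⟩ := hmn hm2
      refine ⟨s2, hs2, ?_, Or.inr hsA⟩
      simp only [wp] at hw ⊢
      rw [hupd u hu, hupd s2 hsA]; exact hw
    · intro hm2 s2 hs2
      obtain ⟨hw, hsA⟩ := hmx hm2 s2 hs2
      refine ⟨?_, Or.inr hsA⟩
      simp only [wp] at hw ⊢
      rw [hupd u hu, hupd s2 hsA]; exact hw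

/-- there is a greatest positively certified set -/
lemma exists_greatest_PC [Fintype V] (G : MPGame V) (E' : V → V → Prop) :
    ∃ B φ, PC G E' B φ ∧ ∀ B' φ', PC G E' B' φ' → B' ⊆ B := by
  classical
  set P : ℕ → Prop := fun n => ∃ B φ, PC G E' B φ ∧ Set.ncard B = n with hP
  have h0 : P 0 := ⟨∅, 0, fun v hv => absurd hv (Set.notMem_empty v), Set.ncard_empty V⟩
  have hbd : ∀ n, P n → n ≤ Fintype.card V := by
    rintro n ⟨B, φ, _, rfl⟩
    have := Set.ncard_le_ncard (Set.subset_univ B) Set.finite_univ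
    simpa [Set.ncard_univ, Nat.card_eq_fintype_card] using this
  have hspec : P (Nat.findGreatest P (Fintype.card V)) :=
    Nat.findGreatest_spec (Nat.zero_le _) h0
  obtain ⟨B, φ, hB, hcard⟩ := hspec
  refine ⟨B, φ, hB, ?_⟩
  intro B' φ' hB'
  obtain ⟨ψ, hun⟩ := PC_union hB hB'
  have hle : Set.ncard (B ∪ B') ≤ Nat.findGreatest P (Fintype.card V) :=
    Nat.le_findGreatest (hbd _ ⟨_, _, hun, rfl⟩) ⟨_, _, hun, rfl⟩
  have heq : B = B ∪ B' :=
    Set.eq_of_subset_of_ncard_le Set.subset_union_left (by omega) (Set.toFinite _)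
  exact fun v hv => heq ▸ (Or.inr hv : v ∈ B ∪ B')

/-- there is a greatest negatively certified set -/
lemma exists_greatest_NC [Fintype V] (G : MPGame V) (E' : V → V → Prop) :
    ∃ A φ, NC G E' A φ ∧ ∀ A' φ', NC G E' A' φ' → A' ⊆ A := by
  classical
  set P : ℕ → Prop := fun n => ∃ A φ, NC G E' A φ ∧ Set.ncard A = n with hP
  have h0 : P 0 := ⟨∅, 0, fun v hv => absurd hv (Set.notMem_empty v), Set.ncard_empty V⟩
  have hbd : ∀ n, P n → n ≤ Fintype.card V := by
    rintro n ⟨B, φ, _, rfl⟩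
    have := Set.ncard_le_ncard (Set.subset_univ B) Set.finite_univ
    simpa [Set.ncard_univ, Nat.card_eq_fintype_card] using this
  have hspec : P (Nat.findGreatest P (Fintype.card V)) :=
    Nat.findGreatest_spec (Nat.zero_le _) h0
  obtain ⟨A, φ, hA, hcard⟩ := hspec
  refine ⟨A, φ, hA, ?_⟩
  intro A' φ' hA'
  obtain ⟨ψ, hun⟩ := NC_union hA hA'
  have hle : Set.ncard (A ∪ A') ≤ Nat.findGreatest P (Fintype.card V) :=
    Nat.le_findGreatest (hbd _ ⟨_, _, hun, rfl⟩) ⟨_, _, hun, rfl⟩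
  have heq : A = A ∪ A' :=
    Set.eq_of_subset_of_ncard_le Set.subset_union_left (by omega) (Set.toFinite _)
  exact fun v hv => heq ▸ (Or.inr hv : v ∈ A ∪ A')

/-- a transitive-closure step can be unfolded into a finite chain -/
lemma chain_of_transGen {s : V → V → Prop} {a b : V} (h : Relation.TransGen s a b) :
    ∃ n, 0 < n ∧ ∃ g : ℕ → V, g 0 = a ∧ g n = b ∧ ∀ i < n, s (g i) (g (i + 1)) := by
  induction h with
  | @single c hab =>
      refine ⟨1, one_pos, fun i => if i = 0 then a else c, by simp, by simp, ?_⟩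
      intro i hi
      interval_cases i
      simpa using hab
  | @tail c d hab hbc ih =>
      obtain ⟨n, hn, g, hg0, hgn, hstep⟩ := ih
      refine ⟨n + 1, by omega, fun i => if i ≤ n then g i else d, by simp [hn.le, hg0], by simp, ?_⟩
      intro i hi
      rcases Nat.lt_or_ge i n with hlt | hge
      · simpa [Nat.le_of_lt hlt, Nat.succ_le_of_lt hlt] using hstep i hlt
      · have hieq : i = n := by omega
        subst hieq
        simpa [hgn] using hbc

/-- no transitive cycle through zero-weight edges, given no zero cycle -/
lemma no_zero_transGen (G : MPGame V) (hz : G.NoZeroCycle) {s : V → V → Prop}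
    (hs : ∀ a b, s a b → G.E a b ∧ G.w a b = 0) (a : V) :
    ¬ Relation.TransGen s a a := by
  intro h
  obtain ⟨n, hn, g, hg0, hgn, hstep⟩ := chain_of_transGen h
  have hmod : ∀ i : ℕ, (i + 1) % n = (i % n + 1) % n :=
    fun i => (((Nat.mod_modEq i n).add_right 1).symm : _)
  have hkey : ∀ i : ℕ, s (g (i % n)) (g ((i + 1) % n)) := by
    intro i
    have hk : i % n < n := Nat.mod_lt _ hn
    rcases Nat.lt_or_ge (i % n + 1) n with hlt | hge
    · rw [hmod i, Nat.mod_eq_of_lt hlt]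
      exact hstep _ hk
    · have he : i % n + 1 = n := by omega
      rw [hmod i, he, Nat.mod_self]
      have := hstep (i % n) hk
      rw [he, hgn, ← hg0] at this
      exact this
  set π : G.Path := ⟨fun i => g (i % n), fun i => (hs _ _ (hkey i)).1⟩ with hπ
  have hws : ∀ m, π.wsum m = 0 := by
    intro m
    apply Finset.sum_eq_zero
    intro i _
    exact (hs _ _ (hkey i)).2
  have hv : π.vert 0 = π.vert n := by
    show g (0 % n) = g (n % n)
    rw [Nat.zero_mod, Nat.mod_self]
  exact hz π 0 n hn hv (by rw [hws 0, hws n])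

/-- paths in a potential reduction are paths in the original game -/
def potPath {G : MPGame V} {φ : V → ℤ} (π : (G.pot φ).Path) : G.Path := ⟨π.vert, π.adj⟩

lemma potPath_wsum {G : MPGame V} {φ : V → ℤ} (π : (G.pot φ).Path) (k : ℕ) :
    π.wsum k = (potPath π).wsum k + φ (π.vert k) - φ (π.vert 0) := by
  induction k with
  | zero => simp [Path.wsum]
  | succ k ih =>
      have h1 : π.wsum (k + 1) = π.wsum k + (G.pot φ).w (π.vert k) (π.vert (k + 1)) :=
        Finset.sum_range_succ _ _
      have h2 : (potPath π).wsum (k + 1)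
          = (potPath π).wsum k + G.w (π.vert k) (π.vert (k + 1)) :=
        Finset.sum_range_succ _ _
      have h3 : (G.pot φ).w (π.vert k) (π.vert (k + 1))
          = G.w (π.vert k) (π.vert (k + 1)) + φ (π.vert (k + 1)) - φ (π.vert k) := rfl
      omega

lemma NoZeroCycle.pot {G : MPGame V} (hz : G.NoZeroCycle) (φ : V → ℤ) :
    (G.pot φ).NoZeroCycle := by
  intro π i j hij hv heq
  have hi := potPath_wsum π i
  have hj := potPath_wsum π j
  rw [hv] at hi
  exact hz (potPath π) i j hij hv (by omega)

/-- in an arena where every vertex has a unique successor, there is a nonempty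
certificate of one of the two kinds -/
lemma unique_succ_cert [Fintype V] (G : MPGame V) (hz : G.NoZeroCycle)
    {E' : V → V → Prop} (hA : Arena G E')
    (huniq : ∀ v ∈ Dom E', ∀ t t', E' v t → E' v t' → t = t')
    {x : V} (hx : x ∈ Dom E') :
    (∃ B φ, B.Nonempty ∧ PC G E' B φ) ∨ (∃ A φ, A.Nonempty ∧ NC G E' A φ) := by
  classical
  set f : V → V := fun v => if h : ∃ t, E' v t then h.choose else v with hfdef
  have hf : ∀ v ∈ Dom E', E' v (f v) := by
    intro v hv
    show E' v (if h : ∃ t, E' v t then h.choose else v)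
    rw [dif_pos (show ∃ t, E' v t from hv)]
    exact (show ∃ t, E' v t from hv).choose_spec
  have horb : ∀ i, f^[i] x ∈ Dom E' := by
    intro i
    induction i with
    | zero => exact hx
    | succ i ih =>
        rw [Function.iterate_succ_apply']
        exact ⟨_, hA.2 _ _ (hf _ ih) |>.choose_spec⟩
  obtain ⟨i, j, hne, hij⟩ :=
    Fintype.exists_ne_map_eq_of_card_lt (fun i : Fin (Fintype.card V + 1) => f^[(i : ℕ)] x)
      (by simp)
  wlog hlt : (i : ℕ) < (j : ℕ) generalizing i j
  · have hji : (j : ℕ) < (i : ℕ) := by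
      rcases Nat.lt_trichotomy (i : ℕ) (j : ℕ) with h | h | h
      · exact absurd h hlt
      · exact absurd (Fin.ext h) hne
      · exact h
    exact this j i hne.symm hij.symm hji
  set y : V := f^[(i : ℕ)] x with hy
  have hyy : ∃ k, 0 < k ∧ f^[k] y = y := by
    refine ⟨(j : ℕ) - (i : ℕ), by omega, ?_⟩
    rw [hy, ← Function.iterate_add_apply,
      (by omega : (j : ℕ) - (i : ℕ) + (i : ℕ) = (j : ℕ))]
    exact hij.symm.trans hy
  set k : ℕ := Nat.find hyy with hkdef
  obtain ⟨hkpos, hkfix⟩ : 0 < k ∧ f^[k] y = y := Nat.find_spec hyy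
  have hy_dom : ∀ t, f^[t] y ∈ Dom E' := by
    intro t
    rw [hy, ← Function.iterate_add_apply]
    exact horb _
  have hdis : ∀ a b, a ≤ b → b < k → f^[a] y = f^[b] y → a = b := by
    intro a b hab hbk he
    by_contra hne2
    have halt : a < b := lt_of_le_of_ne hab hne2
    have hQ : 0 < k - b + a ∧ f^[k - b + a] y = y := by
      constructor
      · omega
      · rw [Function.iterate_add_apply, he, ← Function.iterate_add_apply,
          (by omega : k - b + b = k), hkfix]
    exact Nat.find_min hyy (by omega : k - b + a < k) hQ
  set S : Set V := {v | ∃ t, t < k ∧ f^[t] y = v} with hS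
  have hex : ∀ v, ∃ t, (t < k ∧ f^[t] y = v) ∨ t = k := fun v => ⟨k, Or.inr rfl⟩
  set idx : V → ℕ := fun v => Nat.find (hex v) with hidx
  have hidx_of : ∀ t, t < k → idx (f^[t] y) = t := by
    intro t ht
    show Nat.find (hex (f^[t] y)) = t
    have hle : Nat.find (hex (f^[t] y)) ≤ t := Nat.find_min' _ (Or.inl ⟨ht, rfl⟩)
    rcases Nat.find_spec (hex (f^[t] y)) with ⟨hlt2, heq2⟩ | heq2
    · exact hdis _ _ hle ht heq2
    · omega
  set psum : ℕ → ℤ := fun t => ∑ r ∈ Finset.range t, G.w (f^[r] y) (f^[r + 1] y) with hpsum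
  set φ : V → ℤ := fun v => -psum (idx v) with hφ
  -- the cycle weight is nonzero
  have hπ : ∀ r, G.E (f^[r] y) (f^[r + 1] y) := by
    intro r
    rw [Function.iterate_succ_apply']
    exact hA.1 _ _ (hf _ (hy_dom r))
  set π : G.Path := ⟨fun r => f^[r] y, hπ⟩ with hπ2
  have hsne : psum k ≠ 0 := by
    have := hz π 0 k hkpos (by show f^[0] y = f^[k] y; rw [hkfix]; rfl)
    intro h0
    apply this
    show π.wsum 0 = π.wsum k
    have h1 : π.wsum 0 = 0 := rfl
    have h2 : π.wsum k = psum k := rfl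
    omega
  have hedge : ∀ v ∈ S, E' v (f v) ∧ f v ∈ S ∧
      (wp G φ v (f v) = 0 ∨ wp G φ v (f v) = psum k) ∧
      (∀ t', E' v t' → t' = f v) := by
    rintro v ⟨t, htk, rfl⟩
    have hdom : f^[t] y ∈ Dom E' := hy_dom t
    have he : E' (f^[t] y) (f (f^[t] y)) := hf _ hdom
    have hfv : f (f^[t] y) = f^[t + 1] y := (Function.iterate_succ_apply' f t y).symm
    have hidxv : idx (f^[t] y) = t := hidx_of t htk
    refine ⟨he, ?_, ?_, fun t' ht' => huniq _ hdom _ _ ht' he⟩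
    · rcases Nat.lt_or_ge (t + 1) k with hlt2 | hge2
      · exact ⟨t + 1, hlt2, hfv.symm⟩
      · have : t + 1 = k := by omega
        rw [hfv, this, hkfix]
        exact ⟨0, hkpos, rfl⟩
    · rcases Nat.lt_or_ge (t + 1) k with hlt2 | hge2
      · left
        have hidxfv : idx (f (f^[t] y)) = t + 1 := by rw [hfv]; exact hidx_of _ hlt2
        simp only [wp, hφ, hidxv, hidxfv]
        have : psum (t + 1) = psum t + G.w (f^[t] y) (f^[t + 1] y) :=
          Finset.sum_range_succ _ _
        rw [← hfv] at this
        omega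
      · right
        have hteq : t + 1 = k := by omega
        have hfy : f (f^[t] y) = y := by rw [hfv, hteq, hkfix]
        have hidxfv : idx (f (f^[t] y)) = 0 := by rw [hfy]; exact hidx_of 0 hkpos
        simp only [wp, hφ, hidxv, hidxfv]
        have h1 : psum (t + 1) = psum t + G.w (f^[t] y) (f^[t + 1] y) :=
          Finset.sum_range_succ _ _
        have h2 : psum 0 = 0 := rfl
        have h3 : G.w (f^[t] y) (f (f^[t] y)) = G.w (f^[t] y) (f^[t + 1] y) := by rw [hfv]
        rw [← hteq]
        omega
  have hSne : S.Nonempty := ⟨y, 0, hkpos, rfl⟩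
  rcases lt_or_gt_of_ne hsne with hneg | hpos
  · -- negative cycle: negative certificate
    right
    refine ⟨S, φ, hSne, ?_⟩
    intro v hv
    obtain ⟨he, hfS, hw, huq⟩ := hedge v hv
    refine ⟨⟨_, he⟩, ?_, ?_⟩
    · intro _
      exact ⟨f v, he, by omega, hfS⟩
    · intro _ t' ht'
      rw [huq t' ht']
      exact ⟨by omega, hfS⟩
  · -- positive cycle: positive certificate
    left
    refine ⟨S, φ, hSne, ?_⟩
    intro v hv
    obtain ⟨he, hfS, hw, huq⟩ := hedge v hv
    refine ⟨⟨_, he⟩, ?_, ?_⟩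
    · intro _ t' ht'
      rw [huq t' ht']
      exact ⟨by omega, hfS⟩
    · intro _
      exact ⟨f v, he, by omega, hfS⟩

/-- The big constant used for shifting потentials. -/
noncomputable def bigL [Fintype V] (G : MPGame V) (φ₁ φ₂ : V → ℤ) : ℤ :=
  1 + (∑ v : V, |φ₁ v|) + (∑ v : V, |φ₂ v|) + ∑ v : V, ∑ t : V, |G.w v t|

lemma bigL_bound [Fintype V] (G : MPGame V) (φ₁ φ₂ : V → ℤ) (v t : V) :
    |φ₁ v| + |φ₂ t| + |G.w v t| < bigL G φ₁ φ₂ := by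
  have h1 : |φ₁ v| ≤ ∑ u : V, |φ₁ u| :=
    Finset.single_le_sum (f := fun u => |φ₁ u|)
      (fun u _ => abs_nonneg _) (Finset.mem_univ v)
  have h1' : |φ₂ t| ≤ ∑ u : V, |φ₂ u| :=
    Finset.single_le_sum (f := fun u => |φ₂ u|)
      (fun u _ => abs_nonneg _) (Finset.mem_univ t)
  have h2 : |G.w v t| ≤ ∑ u : V, ∑ s : V, |G.w u s| := by
    calc |G.w v t| ≤ ∑ s : V, |G.w v s| :=
          Finset.single_le_sum (f := fun s => |G.w v s|)
            (fun s _ => abs_nonneg _) (Finset.mem_univ t)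
      _ ≤ ∑ u : V, ∑ s : V, |G.w u s| :=
          Finset.single_le_sum (f := fun u => ∑ s : V, |G.w u s|)
            (fun u _ => Finset.sum_nonneg fun s _ => abs_nonneg _) (Finset.mem_univ v)
  simp only [bigL]
  omega

/-- lifting a positive certificate on a sub-arena across a boundary into `B`,
using a large downward shift -/
lemma PC_lift_shift [Fintype V] {G : MPGame V} {E' E'' : V → V → Prop}
    {B S : Set V} {φB φ'' : V → ℤ}
    (hB : PC G E' B φB) (hS : PC G E'' S φ'')
    (hsub : ∀ a b, E'' a b → E' a b)
    (hcross : ∀ v ∈ S, G.IsMin v → ∀ t, E' v t → E'' v t ∨ t ∈ B)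
    (hdisj : ∀ v ∈ S, v ∉ B) :
    ∃ ψ, PC G E' (B ∪ S) ψ := by
  classical
  set L : ℤ := bigL G φ'' φB with hL
  refine ⟨fun v => if v ∈ S then φ'' v - L else φB v, ?_⟩
  set ψ : V → ℤ := fun v => if v ∈ S then φ'' v - L else φB v with hψ
  have hψS : ∀ v ∈ S, ψ v = φ'' v - L := fun v hv => if_pos hv
  have hψB : ∀ v ∈ B, ψ v = φB v := fun v hv => if_neg (fun hvS => hdisj v hvS hv)
  intro v hv
  rcases Classical.em (v ∈ S) with hvS | hvS
  · obtain ⟨hdom, hmn, hmx⟩ := hS v hvS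
    refine ⟨⟨_, hsub _ _ hdom.choose_spec⟩, ?_, ?_⟩
    · intro hm t ht
      rcases hcross v hvS hm t ht with ht'' | htB
      · obtain ⟨hw, htS⟩ := hmn hm t ht''
        refine ⟨?_, Or.inr htS⟩
        simp only [wp] at hw ⊢
        rw [hψS v hvS, hψS t htS]
        omega
      · refine ⟨?_, Or.inl htB⟩
        have hbd := bigL_bound G φ'' φB v t
        have h1 : G.w v t ≥ -|G.w v t| := neg_abs_le _
        have h2 : φB t ≥ -|φB t| := neg_abs_le _
        have h3 : φ'' v ≤ |φ'' v| := le_abs_self _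
        have htS : t ∉ S := fun h => hdisj t h htB
        simp only [wp]
        rw [hψS v hvS, hψB t htB]
        omega
    · intro hm
      obtain ⟨t, ht, hw, htS⟩ := hmx hm
      refine ⟨t, hsub _ _ ht, ?_, Or.inr htS⟩
      simp only [wp] at hw ⊢
      rw [hψS v hvS, hψS t htS]
      omega
  · have hvB : v ∈ B := hv.resolve_right hvS
    obtain ⟨hdom, hmn, hmx⟩ := hB v hvB
    refine ⟨hdom, ?_, ?_⟩
    · intro hm t ht
      obtain ⟨hw, htB⟩ := hmn hm t ht
      refine ⟨?_, Or.inl htB⟩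
      simp only [wp] at hw ⊢
      rw [hψB v hvB, hψB t htB]
      exact hw
    · intro hm
      obtain ⟨t, ht, hw, htB⟩ := hmx hm
      refine ⟨t, ht, ?_, Or.inl htB⟩
      simp only [wp] at hw ⊢
      rw [hψB v hvB, hψB t htB]
      exact hw

/-- lifting a negative certificate on a sub-arena across a boundary into `A`,
using a large upward shift -/
lemma NC_lift_shift [Fintype V] {G : MPGame V} {E' E'' : V → V → Prop}
    {A S : Set V} {φA φ'' : V → ℤ}
    (hA : NC G E' A φA) (hS : NC G E'' S φ'')
    (hsub : ∀ a b, E'' a b → E' a b)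
    (hcross : ∀ v ∈ S, ¬ G.IsMin v → ∀ t, E' v t → E'' v t ∨ t ∈ A)
    (hdisj : ∀ v ∈ S, v ∉ A) :
    ∃ ψ, NC G E' (A ∪ S) ψ := by
  classical
  set L : ℤ := bigL G φ'' φA with hL
  refine ⟨fun v => if v ∈ S then φ'' v + L else φA v, ?_⟩
  set ψ : V → ℤ := fun v => if v ∈ S then φ'' v + L else φA v with hψ
  have hψS : ∀ v ∈ S, ψ v = φ'' v + L := fun v hv => if_pos hv
  have hψA : ∀ v ∈ A, ψ v = φA v := fun v hv => if_neg (fun hvS => hdisj v hvS hv)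
  intro v hv
  rcases Classical.em (v ∈ S) with hvS | hvS
  · obtain ⟨hdom, hmn, hmx⟩ := hS v hvS
    refine ⟨⟨_, hsub _ _ hdom.choose_spec⟩, ?_, ?_⟩
    · intro hm
      obtain ⟨t, ht, hw, htS⟩ := hmn hm
      refine ⟨t, hsub _ _ ht, ?_, Or.inr htS⟩
      simp only [wp] at hw ⊢
      rw [hψS v hvS, hψS t htS]
      omega
    · intro hm t ht
      rcases hcross v hvS hm t ht with ht'' | htA
      · obtain ⟨hw, htS⟩ := hmx hm t ht''
        refine ⟨?_, Or.inr htS⟩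
        simp only [wp] at hw ⊢
        rw [hψS v hvS, hψS t htS]
        omega
      · refine ⟨?_, Or.inl htA⟩
        have hbd := bigL_bound G φ'' φA v t
        have h1 : G.w v t ≤ |G.w v t| := le_abs_self _
        have h2 : φA t ≤ |φA t| := le_abs_self _
        have h3 : φ'' v ≥ -|φ'' v| := neg_abs_le _
        simp only [wp]
        rw [hψS v hvS, hψA t htA]
        omega
  · have hvA : v ∈ A := hv.resolve_right hvS
    obtain ⟨hdom, hmn, hmx⟩ := hA v hvA
    refine ⟨hdom, ?_, ?_⟩
    · intro hm
      obtain ⟨t, ht, hw, htA⟩ := hmn hm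
      refine ⟨t, ht, ?_, Or.inl htA⟩
      simp only [wp] at hw ⊢
      rw [hψA v hvA, hψA t htA]
      exact hw
    · intro hm t ht
      obtain ⟨hw, htA⟩ := hmx hm t ht
      refine ⟨?_, Or.inl htA⟩
      simp only [wp] at hw ⊢
      rw [hψA v hvA, hψA t htA]
      exact hw

/-- a certificate only depends on the potential on the certified set -/
lemma PC_congr {G : MPGame V} {E' B φ φ'} (h : PC G E' B φ)
    (he : ∀ v ∈ B, φ' v = φ v) : PC G E' B φ' := by
  intro v hv
  obtain ⟨hdom, hmn, hmx⟩ := h v hv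
  refine ⟨hdom, ?_, ?_⟩
  · intro hm t ht
    obtain ⟨hw, htB⟩ := hmn hm t ht
    refine ⟨?_, htB⟩
    simp only [wp] at hw ⊢
    rw [he v hv, he t htB]
    exact hw
  · intro hm
    obtain ⟨t, ht, hw, htB⟩ := hmx hm
    refine ⟨t, ht, ?_, htB⟩
    simp only [wp] at hw ⊢
    rw [he v hv, he t htB]
    exact hw

lemma NC_congr {G : MPGame V} {E' A φ φ'} (h : NC G E' A φ)
    (he : ∀ v ∈ A, φ' v = φ v) : NC G E' A φ' := by
  intro v hv
  obtain ⟨hdom, hmn, hmx⟩ := h v hv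
  refine ⟨hdom, ?_, ?_⟩
  · intro hm
    obtain ⟨t, ht, hw, htA⟩ := hmn hm
    refine ⟨t, ht, ?_, htA⟩
    simp only [wp] at hw ⊢
    rw [he v hv, he t htA]
    exact hw
  · intro hm t ht
    obtain ⟨hw, htA⟩ := hmx hm t ht
    refine ⟨?_, htA⟩
    simp only [wp] at hw ⊢
    rw [he v hv, he t htA]
    exact hw

/-- combining two negative certificates for the same set over two edge
sub-relations that only differ at the single Max vertex `u` -/
lemma NC_combine {G : MPGame V} {E3 E1 E2 : V → V → Prop} {D : Set V}
    {φ₁ φ₂ : V → ℤ} {u : V}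
    (h₁ : NC G E1 D φ₁) (h₂ : NC G E2 D φ₂)
    (hsub₁ : ∀ a b, E1 a b → E3 a b) (hsub₂ : ∀ a b, E2 a b → E3 a b)
    (hagree : φ₁ u = φ₂ u)
    (hsplit : ∀ v t, E3 v t → (v ≠ u → E1 v t ∧ E2 v t) ∧ (v = u → E1 v t ∨ E2 v t)) :
    NC G E3 D (fun v => min (φ₁ v) (φ₂ v)) := by
  intro v hv
  obtain ⟨hdom₁, hmn₁, hmx₁⟩ := h₁ v hv
  obtain ⟨hdom₂, hmn₂, hmx₂⟩ := h₂ v hv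
  refine ⟨⟨_, hsub₁ _ _ hdom₁.choose_spec⟩, ?_, ?_⟩
  · intro hm
    rcases min_cases (φ₁ v) (φ₂ v) with ⟨he, _⟩ | ⟨he, _⟩
    · obtain ⟨t, ht, hw, htD⟩ := hmn₁ hm
      refine ⟨t, hsub₁ _ _ ht, ?_, htD⟩
      have h4 : min (φ₁ t) (φ₂ t) ≤ φ₁ t := min_le_left _ _
      simp only [wp] at hw ⊢
      omega
    · obtain ⟨t, ht, hw, htD⟩ := hmn₂ hm
      refine ⟨t, hsub₂ _ _ ht, ?_, htD⟩
      have h4 : min (φ₁ t) (φ₂ t) ≤ φ₂ t := min_le_right _ _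
      simp only [wp] at hw ⊢
      omega
  · intro hm t ht
    by_cases hvu : v = u
    · subst hvu
      rcases (hsplit v t ht).2 rfl with h1 | h2
      · obtain ⟨hw, htD⟩ := hmx₁ hm t h1
        refine ⟨?_, htD⟩
        have h4 : min (φ₁ t) (φ₂ t) ≤ φ₁ t := min_le_left _ _
        have h5 : min (φ₁ v) (φ₂ v) = φ₁ v := by omega
        simp only [wp] at hw ⊢
        omega
      · obtain ⟨hw, htD⟩ := hmx₂ hm t h2
        refine ⟨?_, htD⟩
        have h4 : min (φ₁ t) (φ₂ t) ≤ φ₂ t := min_le_right _ _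
        have h5 : min (φ₁ v) (φ₂ v) = φ₂ v := by omega
        simp only [wp] at hw ⊢
        omega
    · obtain ⟨he₁, he₂⟩ := (hsplit v t ht).1 hvu
      rcases min_cases (φ₁ v) (φ₂ v) with ⟨he, _⟩ | ⟨he, _⟩
      · obtain ⟨hw, htD⟩ := hmx₁ hm t he₁
        refine ⟨?_, htD⟩
        have h4 : min (φ₁ t) (φ₂ t) ≤ φ₁ t := min_le_left _ _
        simp only [wp] at hw ⊢
        omega
      · obtain ⟨hw, htD⟩ := hmx₂ hm t he₂
        refine ⟨?_, htD⟩
        have h4 : min (φ₁ t) (φ₂ t) ≤ φ₂ t := min_le_right _ _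
        simp only [wp] at hw ⊢
        omega

/-- combining two positive certificates for the same set over two edge
sub-relations that only differ at the single Min vertex `u` -/
lemma PC_combine {G : MPGame V} {E3 E1 E2 : V → V → Prop} {D : Set V}
    {φ₁ φ₂ : V → ℤ} {u : V}
    (h₁ : PC G E1 D φ₁) (h₂ : PC G E2 D φ₂)
    (hsub₁ : ∀ a b, E1 a b → E3 a b) (hsub₂ : ∀ a b, E2 a b → E3 a b)
    (hagree : φ₁ u = φ₂ u)
    (hsplit : ∀ v t, E3 v t → (v ≠ u → E1 v t ∧ E2 v t) ∧ (v = u → E1 v t ∨ E2 v t)) :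
    PC G E3 D (fun v => max (φ₁ v) (φ₂ v)) := by
  intro v hv
  obtain ⟨hdom₁, hmn₁, hmx₁⟩ := h₁ v hv
  obtain ⟨hdom₂, hmn₂, hmx₂⟩ := h₂ v hv
  refine ⟨⟨_, hsub₁ _ _ hdom₁.choose_spec⟩, ?_, ?_⟩
  · intro hm t ht
    by_cases hvu : v = u
    · subst hvu
      rcases (hsplit v t ht).2 rfl with h1 | h2
      · obtain ⟨hw, htD⟩ := hmn₁ hm t h1
        refine ⟨?_, htD⟩
        have h4 : φ₁ t ≤ max (φ₁ t) (φ₂ t) := le_max_left _ _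
        have h5 : max (φ₁ v) (φ₂ v) = φ₁ v := by omega
        simp only [wp] at hw ⊢
        omega
      · obtain ⟨hw, htD⟩ := hmn₂ hm t h2
        refine ⟨?_, htD⟩
        have h4 : φ₂ t ≤ max (φ₁ t) (φ₂ t) := le_max_right _ _
        have h5 : max (φ₁ v) (φ₂ v) = φ₂ v := by omega
        simp only [wp] at hw ⊢
        omega
    · obtain ⟨he₁, he₂⟩ := (hsplit v t ht).1 hvu
      rcases max_cases (φ₁ v) (φ₂ v) with ⟨he, _⟩ | ⟨he, _⟩
      · obtain ⟨hw, htD⟩ := hmn₁ hm t he₁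
        refine ⟨?_, htD⟩
        have h4 : φ₁ t ≤ max (φ₁ t) (φ₂ t) := le_max_left _ _
        simp only [wp] at hw ⊢
        omega
      · obtain ⟨hw, htD⟩ := hmn₂ hm t he₂
        refine ⟨?_, htD⟩
        have h4 : φ₂ t ≤ max (φ₁ t) (φ₂ t) := le_max_right _ _
        simp only [wp] at hw ⊢
        omega
  · intro hm
    rcases max_cases (φ₁ v) (φ₂ v) with ⟨he, _⟩ | ⟨he, _⟩
    · obtain ⟨t, ht, hw, htD⟩ := hmx₁ hm
      refine ⟨t, hsub₁ _ _ ht, ?_, htD⟩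
      have h4 : φ₁ t ≤ max (φ₁ t) (φ₂ t) := le_max_left _ _
      simp only [wp] at hw ⊢
      omega
    · obtain ⟨t, ht, hw, htD⟩ := hmx₂ hm
      refine ⟨t, hsub₂ _ _ ht, ?_, htD⟩
      have h4 : φ₂ t ≤ max (φ₁ t) (φ₂ t) := le_max_right _ _
      simp only [wp] at hw ⊢
      omega

/-- Main splitting theorem: every sub-arena splits into a negatively and a
positively certified part. -/
theorem main_split [Fintype V] (G : MPGame V) (hz : G.NoZeroCycle) :
    ∀ m : ℕ, ∀ E' : V → V → Prop, Arena G E' →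
      Set.ncard {p : V × V | E' p.1 p.2} ≤ m →
      ∃ A B φ, A ∪ B = Dom E' ∧ NC G E' A φ ∧ PC G E' B φ := by
  intro m
  induction m using Nat.strong_induction_on with
  | _ m IH =>
  intro E' hAr hcard
  classical
  obtain ⟨B, φB, hB, hBmax⟩ := exists_greatest_PC G E'
  set C : Set V := Dom E' \ B with hC
  have hMaxC : ∀ v ∈ C, ¬ G.IsMin v → ∀ t, E' v t → t ∈ C := by
    intro v hv hm t ht
    have htD : t ∈ Dom E' := ⟨_, (hAr.2 v t ht).choose_spec⟩
    refine ⟨htD, fun htB => ?_⟩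
    have hins := PC_ext_max hB hm ht htB hv.2
    exact hv.2 (hBmax _ _ hins (Set.mem_insert v B))
  have hMinC : ∀ v ∈ C, G.IsMin v → ∃ t, E' v t ∧ t ∈ C := by
    intro v hv hm
    by_contra hno
    push_neg at hno
    have hall : ∀ t, E' v t → t ∈ B := by
      intro t ht
      have htD : t ∈ Dom E' := ⟨_, (hAr.2 v t ht).choose_spec⟩
      by_contra htB
      exact hno t ht ⟨htD, htB⟩
    obtain ⟨φ', hins⟩ := PC_ext_min hB hm hv.1 hall hv.2
    exact hv.2 (hBmax _ _ hins (Set.mem_insert v B))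
  set E2' : V → V → Prop := fun a b => E' a b ∧ a ∈ C ∧ b ∈ C with hE2'
  have hsucC : ∀ v ∈ C, ∃ t, E2' v t := by
    intro v hv
    by_cases hm : G.IsMin v
    · obtain ⟨t, ht, htC⟩ := hMinC v hv hm
      exact ⟨t, ht, hv, htC⟩
    · obtain ⟨t, ht⟩ := hv.1
      exact ⟨t, ht, hv, hMaxC v hv hm t ht⟩
  have hAr2 : Arena G E2' := ⟨fun a b h => hAr.1 a b h.1, fun a b h => hsucC b h.2.2⟩
  have hDom2 : Dom E2' = C := by
    ext v
    constructor
    · rintro ⟨t, ht⟩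
      exact ht.2.1
    · exact hsucC v
  have hnoPC2 : ∀ S ψ, PC G E2' S ψ → S = ∅ := by
    intro S ψ hS
    have hScap : ∀ v ∈ S, v ∈ C := by
      intro v hv
      exact hDom2 ▸ PC_subset_dom hS hv
    have hcross : ∀ v ∈ S, G.IsMin v → ∀ t, E' v t → E2' v t ∨ t ∈ B := by
      intro v hv hm t ht
      have htD : t ∈ Dom E' := ⟨_, (hAr.2 v t ht).choose_spec⟩
      by_cases htB : t ∈ B
      · exact Or.inr htB
      · exact Or.inl ⟨ht, hScap v hv, htD, htB⟩
    have hdisj : ∀ v ∈ S, v ∉ B := fun v hv => (hScap v hv).2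
    obtain ⟨ψ', hlift⟩ := PC_lift_shift hB hS (fun a b h => h.1) hcross hdisj
    have hsub := hBmax _ _ hlift
    ext v
    simp only [Set.mem_empty_iff_false, iff_false]
    intro hv
    exact (hScap v hv).2 (hsub (Or.inr hv))
  obtain ⟨A2, φA, hA2, hA2max⟩ := exists_greatest_NC G E2'
  have hA2C : A2 ⊆ C := hDom2 ▸ NC_subset_dom hA2
  set C' : Set V := C \ A2 with hC'
  have hMinC' : ∀ v ∈ C', G.IsMin v → ∀ t, E2' v t → t ∈ C' := by
    intro v hv hm t ht
    have htC : t ∈ C := ht.2.2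
    refine ⟨htC, fun htA => ?_⟩
    have hins := NC_ext_min hA2 hm ht htA hv.2
    exact hv.2 (hA2max _ _ hins (Set.mem_insert v A2))
  have hMaxC' : ∀ v ∈ C', ¬ G.IsMin v → ∃ t, E2' v t ∧ t ∈ C' := by
    intro v hv hm
    by_contra hno
    push_neg at hno
    have hall : ∀ t, E2' v t → t ∈ A2 := by
      intro t ht
      by_contra htA
      exact hno t ht ⟨ht.2.2, htA⟩
    obtain ⟨φ', hins⟩ := NC_ext_max hA2 hm (hsucC v hv.1) hall hv.2
    exact hv.2 (hA2max _ _ hins (Set.mem_insert v A2))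
  set E3 : V → V → Prop := fun a b => E2' a b ∧ a ∈ C' ∧ b ∈ C' with hE3
  have hsucC' : ∀ v ∈ C', ∃ t, E3 v t := by
    intro v hv
    by_cases hm : G.IsMin v
    · obtain ⟨t, ht⟩ := hsucC v hv.1
      exact ⟨t, ht, hv, hMinC' v hv hm t ht⟩
    · obtain ⟨t, ht, htC'⟩ := hMaxC' v hv hm
      exact ⟨t, ht, hv, htC'⟩
  have hAr3 : Arena G E3 := ⟨fun a b h => hAr.1 a b h.1.1, fun a b h => hsucC' b h.2.2⟩
  have hDom3 : Dom E3 = C' := by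
    ext v
    constructor
    · rintro ⟨t, ht⟩
      exact ht.2.1
    · exact hsucC' v
  have hnoNC3 : ∀ S ψ, NC G E3 S ψ → S = ∅ := by
    intro S ψ hS
    have hScap : ∀ v ∈ S, v ∈ C' := by
      intro v hv
      exact hDom3 ▸ NC_subset_dom hS hv
    have hcross : ∀ v ∈ S, ¬ G.IsMin v → ∀ t, E2' v t → E3 v t ∨ t ∈ A2 := by
      intro v hv hm t ht
      by_cases htA : t ∈ A2
      · exact Or.inr htA
      · exact Or.inl ⟨ht, hScap v hv, ht.2.2, htA⟩
    have hdisj : ∀ v ∈ S, v ∉ A2 := fun v hv => (hScap v hv).2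
    obtain ⟨ψ', hlift⟩ := NC_lift_shift hA2 hS (fun a b h => h.1) hcross hdisj
    have hsub := hA2max _ _ hlift
    ext v
    simp only [Set.mem_empty_iff_false, iff_false]
    intro hv
    exact (hScap v hv).2 (hsub (Or.inr hv))
  have hnoPC3 : ∀ S ψ, PC G E3 S ψ → S = ∅ := by
    intro S ψ hS
    apply hnoPC2 S ψ
    refine PC_mono (fun a b h => h.1) ?_ hS
    intro v hv hm t ht
    have hvC' : v ∈ C' := hDom3 ▸ PC_subset_dom hS hv
    exact ⟨ht, hvC', hMinC' v hvC' hm t ht⟩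
  -- C' must be empty
  have hC'empty : C' = ∅ := by
    by_contra hne
    obtain ⟨x, hx⟩ := Set.nonempty_iff_ne_empty.2 hne
    have hxD : x ∈ Dom E3 := hDom3 ▸ hx
    by_cases huniq : ∀ v ∈ Dom E3, ∀ t t', E3 v t → E3 v t' → t = t'
    · rcases unique_succ_cert G hz hAr3 huniq hxD with ⟨S, ψ, hSne, hS⟩ | ⟨S, ψ, hSne, hS⟩
      · exact hSne.ne_empty (hnoPC3 S ψ hS)
      · exact hSne.ne_empty (hnoNC3 S ψ hS)
    · push_neg at huniq
      obtain ⟨u, huD, t₁, t₂, ht₁, ht₂, hne12⟩ := huniq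
      set E1 : V → V → Prop := fun a b => E3 a b ∧ ¬(a = u ∧ b = t₁) with hE1
      set E2 : V → V → Prop := fun a b => E3 a b ∧ (a = u → b = t₁) with hE2
      have hsub1 : ∀ a b, E1 a b → E3 a b := fun a b h => h.1
      have hsub2 : ∀ a b, E2 a b → E3 a b := fun a b h => h.1
      have hsuc1 : ∀ v ∈ C', ∃ t, E1 v t := by
        intro v hv
        by_cases hvu : v = u
        · subst hvu
          exact ⟨t₂, ht₂, fun h => hne12 h.2.symm⟩
        · obtain ⟨t, ht⟩ := hsucC' v hv
          exact ⟨t, ht, fun h => hvu h.1⟩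
      have hsuc2 : ∀ v ∈ C', ∃ t, E2 v t := by
        intro v hv
        by_cases hvu : v = u
        · subst hvu
          exact ⟨t₁, ht₁, fun _ => rfl⟩
        · obtain ⟨t, ht⟩ := hsucC' v hv
          exact ⟨t, ht, fun h => absurd h hvu⟩
      have hAr1 : Arena G E1 :=
        ⟨fun a b h => hAr.1 a b h.1.1.1, fun a b h => hsuc1 b h.1.2.2⟩
      have hAr2' : Arena G E2 :=
        ⟨fun a b h => hAr.1 a b h.1.1.1, fun a b h => hsuc2 b h.1.2.2⟩
      have hDom1 : Dom E1 = C' := by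
        ext v
        constructor
        · rintro ⟨t, ht⟩
          exact ht.1.2.1
        · exact hsuc1 v
      have hDom2' : Dom E2 = C' := by
        ext v
        constructor
        · rintro ⟨t, ht⟩
          exact ht.1.2.1
        · exact hsuc2 v
      -- cardinalities
      have hfin : ({p : V × V | E3 p.1 p.2}).Finite := Set.toFinite _
      have hc3 : Set.ncard {p : V × V | E3 p.1 p.2} ≤ m := by
        refine le_trans (Set.ncard_le_ncard ?_ (Set.toFinite _)) hcard
        rintro ⟨a, b⟩ h
        exact h.1.1
      have hc1 : Set.ncard {p : V × V | E1 p.1 p.2} < m := by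
        have hss : {p : V × V | E1 p.1 p.2} ⊂ {p : V × V | E3 p.1 p.2} := by
          constructor
          · rintro ⟨a, b⟩ h
            exact h.1
          · intro hsup
            have := hsup (show ((u, t₁) : V × V) ∈ {p : V × V | E3 p.1 p.2} from ht₁)
            exact this.2 ⟨rfl, rfl⟩
        exact lt_of_lt_of_le (Set.ncard_lt_ncard hss hfin) hc3
      have hc2 : Set.ncard {p : V × V | E2 p.1 p.2} < m := by
        have hss : {p : V × V | E2 p.1 p.2} ⊂ {p : V × V | E3 p.1 p.2} := by
          constructor
          · rintro ⟨a, b⟩ h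
            exact h.1
          · intro hsup
            have := hsup (show ((u, t₂) : V × V) ∈ {p : V × V | E3 p.1 p.2} from ht₂)
            exact hne12 (this.2 rfl).symm
        exact lt_of_lt_of_le (Set.ncard_lt_ncard hss hfin) hc3
      obtain ⟨A₁, B₁, φ₁, hun₁, hA₁, hB₁⟩ := IH _ hc1 E1 hAr1 le_rfl
      obtain ⟨A₂, B₂, φ₂, hun₂, hA₂, hB₂⟩ := IH _ hc2 E2 hAr2' le_rfl
      have hsplit : ∀ v t, E3 v t →
          (v ≠ u → E1 v t ∧ E2 v t) ∧ (v = u → E1 v t ∨ E2 v t) := by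
        intro v t ht
        constructor
        · intro hvu
          exact ⟨⟨ht, fun h => hvu h.1⟩, ⟨ht, fun h => absurd h hvu⟩⟩
        · rintro rfl
          by_cases htt : t = t₁
          · exact Or.inr ⟨ht, fun _ => htt⟩
          · exact Or.inl ⟨ht, fun h => htt h.2⟩
      by_cases hum : G.IsMin u
      · -- u is a Min vertex: negative certificates transfer, so A₁ = A₂ = ∅
        have hAe : ∀ (E0 : V → V → Prop) (A0 : Set V) (φ0 : V → ℤ),
            (∀ a b, E0 a b → E3 a b) → NC G E0 A0 φ0 →
            (∀ v ∈ A0, ¬ G.IsMin v → ∀ t, E3 v t → E0 v t) → A0 = ∅ := by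
          intro E0 A0 φ0 hs hcert hbk
          exact hnoNC3 A0 φ0 (NC_mono hs hbk hcert)
        have hA₁e : A₁ = ∅ := by
          refine hAe E1 A₁ φ₁ hsub1 hA₁ ?_
          intro v hv hm t ht
          exact ⟨ht, fun h => hm (by rw [h.1]; exact hum)⟩
        have hA₂e : A₂ = ∅ := by
          refine hAe E2 A₂ φ₂ hsub2 hA₂ ?_
          intro v hv hm t ht
          exact ⟨ht, fun h => absurd (show G.IsMin v by rw [h]; exact hum) hm⟩
        have hB₁f : B₁ = C' := by
          rw [← hDom1, ← hun₁, hA₁e, Set.empty_union]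
        have hB₂f : B₂ = C' := by
          rw [← hDom2', ← hun₂, hA₂e, Set.empty_union]
        have hB₁' : PC G E1 C' φ₁ := hB₁f ▸ hB₁
        have hB₂' : PC G E2 C' (fun v => φ₂ v + (φ₁ u - φ₂ u)) :=
          PC_shift (hB₂f ▸ hB₂) _
        have hcomb := PC_combine hB₁' hB₂' hsub1 hsub2 (by omega) hsplit
        have hC'e := hnoPC3 _ _ hcomb
        rw [hC'e] at hx
        exact hx
      · -- u is a Max vertex: positive certificates transfer, so B₁ = B₂ = ∅
        have hB₁e : B₁ = ∅ := by
          refine hnoPC3 B₁ φ₁ (PC_mono hsub1 ?_ hB₁)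
          intro v hv hm t ht
          exact ⟨ht, fun h => absurd (show G.IsMin u by rw [← h.1]; exact hm) hum⟩
        have hB₂e : B₂ = ∅ := by
          refine hnoPC3 B₂ φ₂ (PC_mono hsub2 ?_ hB₂)
          intro v hv hm t ht
          exact ⟨ht, fun h => absurd (show G.IsMin u by rw [← h]; exact hm) hum⟩
        have hA₁f : A₁ = C' := by
          rw [← hDom1, ← hun₁, hB₁e, Set.union_empty]
        have hA₂f : A₂ = C' := by
          rw [← hDom2', ← hun₂, hB₂e, Set.union_empty]
        have hA₁' : NC G E1 C' φ₁ := hA₁f ▸ hA₁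
        have hA₂' : NC G E2 C' (fun v => φ₂ v + (φ₁ u - φ₂ u)) :=
          NC_shift (hA₂f ▸ hA₂) _
        have hcomb := NC_combine hA₁' hA₂' hsub1 hsub2 (by omega) hsplit
        have hC'e := hnoNC3 _ _ hcomb
        rw [hC'e] at hx
        exact hx
  -- now A2 = C
  have hA2eq : A2 = C := by
    apply Set.Subset.antisymm hA2C
    intro v hv
    by_contra hvA
    have : v ∈ C' := ⟨hv, hvA⟩
    rw [hC'empty] at this
    exact this
  have hACert : NC G E' C φA := by
    refine NC_mono (fun a b h => h.1) ?_ (hA2eq ▸ hA2)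
    intro v hv hm t ht
    exact ⟨ht, hv, hMaxC v hv hm t ht⟩
  -- merge potentials
  refine ⟨C, B, fun v => if v ∈ B then φB v else φA v, ?_, ?_, ?_⟩
  · ext v
    constructor
    · rintro (hv | hv)
      · exact hv.1
      · exact PC_subset_dom hB hv
    · intro hv
      by_cases hvB : v ∈ B
      · exact Or.inr hvB
      · exact Or.inl ⟨hv, hvB⟩
  · refine NC_congr hACert ?_
    intro v hv
    exact if_neg hv.2
  · refine PC_congr hB ?_
    intro v hv
    exact if_pos hv

/-- The final theorem, internal version. -/
theorem reducing_potential [Fintype V] (G : MPGame V) (hz : G.NoZeroCycle) :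
    ∃ φ : V → ℤ, (G.pot φ).Reduced := by
  classical
  have hAr : Arena G G.E := ⟨fun a b h => h, fun a b _ => G.sinkless b⟩
  obtain ⟨A, B, φ, hun, hNC, hPC⟩ :=
    main_split G hz (Set.ncard {p : V × V | G.E p.1 p.2}) G.E hAr le_rfl
  have hDomU : Dom G.E = Set.univ := by
    ext v
    simp only [Set.mem_univ, iff_true]
    exact G.sinkless v
  rw [hDomU] at hun
  have hzp : (G.pot φ).NoZeroCycle := NoZeroCycle.pot hz φ
  -- well-founded relation along zero edges
  set lt : V → V → Prop :=
    fun t v => (G.pot φ).E v t ∧ (G.pot φ).w v t = 0 with hltdef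
  have hwf : WellFounded (Relation.TransGen lt) := by
    have hirr : ∀ a, ¬ Relation.TransGen lt a a := by
      intro a ha
      have hsw : Relation.TransGen (Function.swap lt) a a := by
        rw [Relation.transGen_swap]
        exact ha
      exact no_zero_transGen (G.pot φ) hzp
        (s := Function.swap lt) (fun a b h => ⟨h.1, h.2⟩) a hsw
    haveI : IsTrans V (Relation.TransGen lt) :=
      ⟨fun a b c hab hbc => hab.trans hbc⟩
    haveI : IsIrrefl V (Relation.TransGen lt) := ⟨hirr⟩
    exact Finite.wellFounded_of_trans_of_irrefl _
  have hwf' : WellFounded lt := Subrelation.wf (fun h => Relation.TransGen.single h) hwf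
  -- A is contained in ZN
  have R1 : ∀ v, v ∈ A → (G.pot φ).ZNr Set.univ v := by
    intro v
    induction v using WellFounded.induction hwf' with
    | _ v IH =>
    intro hvA
    obtain ⟨hdom, hmn, hmx⟩ := hNC v hvA
    by_cases hm : G.IsMin v
    · obtain ⟨t, ht, hw, htA⟩ := hmn hm
      rcases lt_or_eq_of_le hw with hlt | heq
      · exact ZNr.minNeg v t (Set.mem_univ v) hm (Set.mem_univ t) ht hlt
      · exact ZNr.minZero v t (Set.mem_univ v) hm (Set.mem_univ t) ht heq
          (IH t ⟨ht, heq⟩ htA)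
    · refine ZNr.max v (Set.mem_univ v) hm ?_ ?_
      · intro t _ ht
        exact (hmx hm t ht).1
      · intro t _ ht hw0
        exact IH t ⟨ht, hw0⟩ (hmx hm t ht).2
  -- B is contained in ZP
  have R1' : ∀ v, v ∈ B → (G.pot φ).ZPr Set.univ v := by
    intro v
    induction v using WellFounded.induction hwf' with
    | _ v IH =>
    intro hvB
    obtain ⟨hdom, hmn, hmx⟩ := hPC v hvB
    by_cases hm : G.IsMin v
    · refine ZPr.min v (Set.mem_univ v) hm ?_ ?_
      · intro t _ ht
        exact (hmn hm t ht).1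
      · intro t _ ht hw0
        exact IH t ⟨ht, hw0⟩ (hmn hm t ht).2
    · obtain ⟨t, ht, hw, htB⟩ := hmx hm
      rcases lt_or_eq_of_le hw with hlt | heq
      · exact ZPr.maxPos v t (Set.mem_univ v) hm (Set.mem_univ t) ht hlt
      · exact ZPr.maxZero v t (Set.mem_univ v) hm (Set.mem_univ t) ht heq.symm
          (IH t ⟨ht, heq.symm⟩ htB)
  -- ZN avoids B
  have R2 : ∀ v, (G.pot φ).ZNr Set.univ v → v ∉ B := by
    intro v hv
    induction hv with
    | minNeg v t _ hm _ ht hwlt =>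
        intro hvB
        exact absurd hwlt (not_lt.2 (((hPC v hvB).2.1 hm t ht).1))
    | minZero v t _ hm _ ht hw0 hZN IH =>
        intro hvB
        exact IH (((hPC v hvB).2.1 hm t ht).2)
    | max v _ hm hall hzn IH =>
        intro hvB
        obtain ⟨t, ht, hw, htB⟩ := (hPC v hvB).2.2 hm
        have hle := hall t (Set.mem_univ t) ht
        exact IH t (Set.mem_univ t) ht (le_antisymm hle hw) htB
  -- ZP avoids A
  have R2' : ∀ v, (G.pot φ).ZPr Set.univ v → v ∉ A := by
    intro v hv
    induction hv with
    | maxPos v t _ hm _ ht hwlt =>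
        intro hvA
        exact absurd hwlt (not_lt.2 (((hNC v hvA).2.2 hm t ht).1))
    | maxZero v t _ hm _ ht hw0 hZP IH =>
        intro hvA
        exact IH (((hNC v hvA).2.2 hm t ht).2)
    | min v _ hm hall hzp' IH =>
        intro hvA
        obtain ⟨t, ht, hw, htA⟩ := (hNC v hvA).2.1 hm
        have hle := hall t (Set.mem_univ t) ht
        exact IH t (Set.mem_univ t) ht (le_antisymm hw hle) htA
  refine ⟨φ, ?_, ?_⟩
  · -- the ZN side of reducedness
    intro v hv
    have hvA : v ∈ A := by
      have : v ∈ A ∪ B := hun.symm ▸ Set.mem_univ v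
      rcases this with h | h
      · exact h
      · exact absurd h (R2 v hv)
    obtain ⟨hdom, hmn, hmx⟩ := hNC v hvA
    constructor
    · intro hm
      obtain ⟨t, ht, hw, htA⟩ := hmn hm
      exact ⟨t, Set.mem_univ t, ht, hw, R1 t htA⟩
    · intro hm t _ ht
      obtain ⟨hw, htA⟩ := hmx hm t ht
      exact ⟨hw, R1 t htA⟩
  · -- the ZP side of reducedness
    intro v hv
    have hvB : v ∈ B := by
      have : v ∈ A ∪ B := hun.symm ▸ Set.mem_univ v
      rcases this with h | h
      · exact absurd h (R2' v hv)
      · exact h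
    obtain ⟨hdom, hmn, hmx⟩ := hPC v hvB
    constructor
    · intro hm
      obtain ⟨t, ht, hw, htB⟩ := hmx hm
      exact ⟨t, Set.mem_univ t, ht, hw, R1' t htB⟩
    · intro hm t _ ht
      obtain ⟨hw, htB⟩ := hmn hm t ht
      exact ⟨hw, R1' t htB⟩

end MPAux

open MPGame in
/-- every finite game with no cycle of total weight zero
admits a reducing potential. -/
theorem statement2 {V : Type*} [Fintype V] (G : MPGame V)
    (hz : G.NoZeroCycle) :
    ∃ φ : V → ℤ, (G.pot φ).Reduced := by
  exact MPAux.reducing_potential G hz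
end

section
/- Let G be a game with no cycle of total weight zero and let φ be any reducing potential for G. Then ZN_φ is exactly the set of vertices whose MP-value is < 0 and ZP_φ is exactly the set of vertices whose MP-value is > 0; in particular the partition into ZN_φ and ZP_φ is independent of the choice of reducing potential φ. -/
section Aux
set_option linter.unusedSectionVars false
namespace MPGame
open Filter

variable {V : Type*} [Fintype V] {G : MPGame V} (φ : V → ℤ)

/-- partial sums in the potential-reduced game, up to the constant `φ (vert 0)`. -/
def gp (π : G.Path) (k : ℕ) : ℤ := π.wsum k + φ (π.vert k)

lemma gp_succ (π : G.Path) (k : ℕ) :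
    gp φ π (k + 1) = gp φ π k + (G.pot φ).w (π.vert k) (π.vert (k + 1)) := by
  simp [gp, Path.wsum, Finset.sum_range_succ, pot]; ring

lemma gp_ne (hz : G.NoZeroCycle) (π : G.Path) {i j : ℕ} (hij : i < j)
    (hv : π.vert i = π.vert j) : gp φ π i ≠ gp φ π j := by
  intro h
  apply hz π i j hij hv
  unfold gp at h
  rw [hv] at h
  omega

lemma gp_anti (π : G.Path)
    (hw : ∀ i, (G.pot φ).w (π.vert i) (π.vert (i + 1)) ≤ 0) :
    ∀ a b, a ≤ b → gp φ π b ≤ gp φ π a := by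
  intro a b hab
  induction b with
  | zero => simp_all
  | succ n ih =>
    rcases Nat.lt_or_ge a (n+1) with h | h
    · have := ih (Nat.lt_succ_iff.1 h)
      have := hw n
      rw [gp_succ]
      omega
    · have heq : a = n + 1 := le_antisymm hab h
      subst heq
      exact le_refl _
lemma gp_mono (π : G.Path)
    (hw : ∀ i, 0 ≤ (G.pot φ).w (π.vert i) (π.vert (i + 1))) :
    ∀ a b, a ≤ b → gp φ π a ≤ gp φ π b := by
  intro a b hab
  induction b with
  | zero => simp_all
  | succ n ih =>
    rcases Nat.lt_or_ge a (n+1) with h | h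
    · have := ih (Nat.lt_succ_iff.1 h)
      have := hw n
      rw [gp_succ]
      omega
    · have heq : a = n + 1 := le_antisymm hab h
      subst heq
      exact le_refl _

lemma gp_window_le (hz : G.NoZeroCycle) (π : G.Path)
    (hw : ∀ i, (G.pot φ).w (π.vert i) (π.vert (i + 1)) ≤ 0) (m : ℕ) :
    gp φ π (m + Fintype.card V) ≤ gp φ π m - 1 := by
  set n := Fintype.card V with hn
  have key : ∀ a b : Fin (n + 1), (a : ℕ) < b → π.vert (m + a) = π.vert (m + b) →
      gp φ π (m + n) ≤ gp φ π m - 1 := by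
    intro a b hab heq
    have h1 : gp φ π (m + (b:ℕ)) ≠ gp φ π (m + (a:ℕ)) :=
      (gp_ne φ hz π (by omega) heq).symm
    have h2 : gp φ π (m + (b:ℕ)) ≤ gp φ π (m + (a:ℕ)) :=
      gp_anti φ π hw _ _ (by omega)
    have h3 : gp φ π (m + n) ≤ gp φ π (m + (b:ℕ)) :=
      gp_anti φ π hw _ _ (by omega)
    have h4 : gp φ π (m + (a:ℕ)) ≤ gp φ π m :=
      gp_anti φ π hw _ _ (by omega)
    omega
  obtain ⟨a, b, hne, heq⟩ :=
    Fintype.exists_ne_map_eq_of_card_lt (fun j : Fin (n + 1) => π.vert (m + j))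
      (by simp [hn])
  rcases lt_or_gt_of_ne (Fin.val_ne_iff.2 hne) with h | h
  · exact key a b h heq
  · exact key b a h heq.symm

lemma gp_window_ge (hz : G.NoZeroCycle) (π : G.Path)
    (hw : ∀ i, 0 ≤ (G.pot φ).w (π.vert i) (π.vert (i + 1))) (m : ℕ) :
    gp φ π m + 1 ≤ gp φ π (m + Fintype.card V) := by
  set n := Fintype.card V with hn
  have key : ∀ a b : Fin (n + 1), (a : ℕ) < b → π.vert (m + a) = π.vert (m + b) →
      gp φ π m + 1 ≤ gp φ π (m + n) := by
    intro a b hab heq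
    have h1 : gp φ π (m + (a:ℕ)) ≠ gp φ π (m + (b:ℕ)) :=
      gp_ne φ hz π (by omega) heq
    have h2 : gp φ π (m + (a:ℕ)) ≤ gp φ π (m + (b:ℕ)) :=
      gp_mono φ π hw _ _ (by omega)
    have h3 : gp φ π (m + (b:ℕ)) ≤ gp φ π (m + n) :=
      gp_mono φ π hw _ _ (by omega)
    have h4 : gp φ π m ≤ gp φ π (m + (a:ℕ)) :=
      gp_mono φ π hw _ _ (by omega)
    omega
  obtain ⟨a, b, hne, heq⟩ :=
    Fintype.exists_ne_map_eq_of_card_lt (fun j : Fin (n + 1) => π.vert (m + j))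
      (by simp [hn])
  rcases lt_or_gt_of_ne (Fin.val_ne_iff.2 hne) with h | h
  · exact key a b h heq
  · exact key b a h heq.symm

lemma gp_bound_le (hz : G.NoZeroCycle) (π : G.Path)
    (hw : ∀ i, (G.pot φ).w (π.vert i) (π.vert (i + 1)) ≤ 0) (k : ℕ) :
    gp φ π k ≤ gp φ π 0 - (k / Fintype.card V : ℕ) := by
  set n := Fintype.card V with hn
  have hnpos : 0 < n := Fintype.card_pos_iff.2 ⟨π.vert 0⟩
  have hmul : ∀ m : ℕ, gp φ π (m * n) ≤ gp φ π 0 - m := by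
    intro m
    induction m with
    | zero => simp
    | succ p ih =>
      have hwin := gp_window_le φ hz π hw (p * n)
      rw [← hn] at hwin
      have he : (p + 1) * n = p * n + n := by ring
      rw [he]
      push_cast
      push_cast at ih
      omega
  have h1 : gp φ π k ≤ gp φ π ((k / n) * n) :=
    gp_anti φ π hw _ _ (Nat.div_mul_le_self k n)
  have := hmul (k / n)
  omega

lemma gp_bound_ge (hz : G.NoZeroCycle) (π : G.Path)
    (hw : ∀ i, 0 ≤ (G.pot φ).w (π.vert i) (π.vert (i + 1))) (k : ℕ) :
    gp φ π 0 + (k / Fintype.card V : ℕ) ≤ gp φ π k := by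
  set n := Fintype.card V with hn
  have hnpos : 0 < n := Fintype.card_pos_iff.2 ⟨π.vert 0⟩
  have hmul : ∀ m : ℕ, gp φ π 0 + m ≤ gp φ π (m * n) := by
    intro m
    induction m with
    | zero => simp
    | succ p ih =>
      have hwin := gp_window_ge φ hz π hw (p * n)
      rw [← hn] at hwin
      have he : (p + 1) * n = p * n + n := by ring
      rw [he]
      push_cast
      push_cast at ih
      omega
  have h1 : gp φ π ((k / n) * n) ≤ gp φ π k :=
    gp_mono φ π hw _ _ (Nat.div_mul_le_self k n)
  have := hmul (k / n)
  omega

lemma ev_bound {n : ℕ} (hn : 0 < n) (A : ℤ) (f : ℕ → ℤ)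
    (hf : ∀ k, f k ≤ A - (k / n : ℕ)) :
    ∀ᶠ k in Filter.atTop, (f k : ℝ) / k ≤ -(1 / (2 * n)) := by
  have hn' : (0:ℝ) < n := by exact_mod_cast hn
  filter_upwards [Filter.eventually_ge_atTop (2 * n * (A.toNat + 1))] with k hk
  have hkpos : 0 < k := lt_of_lt_of_le (by positivity) hk
  have hk0 : (0:ℝ) < k := by exact_mod_cast hkpos
  have h1 := (@Int.cast_le ℝ _ _ _).2 (hf k)
  rw [Int.cast_sub, Int.cast_natCast] at h1
  have e1 : (n:ℝ) * ((k / n : ℕ) : ℝ) + ((k % n : ℕ) : ℝ) = (k:ℝ) := by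
    exact_mod_cast Nat.div_add_mod k n
  have e2 : ((k % n : ℕ) : ℝ) < (n:ℝ) := by exact_mod_cast Nat.mod_lt k hn
  have e3 : (0:ℝ) ≤ ((k % n : ℕ) : ℝ) := by positivity
  have hA : (A:ℝ) ≤ ((A.toNat : ℤ) : ℝ) := by exact_mod_cast Int.self_le_toNat A
  have hkK : 2 * (n:ℝ) * (((A.toNat : ℤ):ℝ) + 1) ≤ (k:ℝ) := by exact_mod_cast hk
  have hd : (0:ℝ) ≤ ((k / n : ℕ) : ℝ) := by positivity
  have key : (f k : ℝ) * (2 * n) ≤ (-1) * k := by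
    nlinarith [mul_le_mul_of_nonneg_left h1 (by positivity : (0:ℝ) ≤ 2 * (n:ℝ)),
      mul_le_mul_of_nonneg_left hA (by positivity : (0:ℝ) ≤ 2 * (n:ℝ))]
  have hrw : -(1 / (2 * (n:ℝ))) = (-1) / (2 * (n:ℝ)) := by ring
  rw [hrw, div_le_div_iff₀ hk0 (by positivity : (0:ℝ) < 2 * (n:ℝ))]
  exact key

lemma limsup_lt_zero {f : ℕ → ℤ} {c : ℝ} (hc : c < 0)
    (hev : ∀ᶠ k in Filter.atTop, (f k : ℝ) / k ≤ c) :
    Filter.limsup (fun k => (((f k : ℝ) / (k : ℝ)) : EReal)) Filter.atTop < 0 := by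
  have h1 : Filter.limsup (fun k => (((f k : ℝ) / (k : ℝ)) : EReal)) Filter.atTop ≤ (c : EReal) :=
    Filter.limsup_le_of_le (by isBoundedDefault)
      (hev.mono fun k hk => EReal.coe_le_coe_iff.2 hk)
  refine lt_of_le_of_lt h1 ?_
  rw [← EReal.coe_zero]
  exact EReal.coe_lt_coe_iff.2 hc

lemma limsup_pos {f : ℕ → ℤ} {c : ℝ} (hc : 0 < c)
    (hev : ∀ᶠ k in Filter.atTop, c ≤ (f k : ℝ) / k) :
    0 < Filter.limsup (fun k => (((f k : ℝ) / (k : ℝ)) : EReal)) Filter.atTop := by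
  have h1 : (c : EReal) ≤ Filter.limsup (fun k => (((f k : ℝ) / (k : ℝ)) : EReal)) Filter.atTop :=
    Filter.le_limsup_of_frequently_le
      ((hev.mono fun k hk => EReal.coe_le_coe_iff.2 hk).frequently) (by isBoundedDefault)
  refine lt_of_lt_of_le ?_ h1
  rw [← EReal.coe_zero]
  exact EReal.coe_lt_coe_iff.2 hc


lemma MP_le_coe {π : G.Path} {c : ℝ}
    (hev : ∀ᶠ k in Filter.atTop, (π.wsum k : ℝ) / k ≤ c) : MP π ≤ (c : EReal) :=
  Filter.limsup_le_of_le (by isBoundedDefault)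
    (hev.mono fun k hk => EReal.coe_le_coe_iff.2 hk)

lemma coe_le_MP {π : G.Path} {c : ℝ}
    (hev : ∀ᶠ k in Filter.atTop, c ≤ (π.wsum k : ℝ) / k) : (c : EReal) ≤ MP π :=
  Filter.le_limsup_of_frequently_le
    ((hev.mono fun k hk => EReal.coe_le_coe_iff.2 hk).frequently) (by isBoundedDefault)

lemma MPval_neg_of_ZN (hz : G.NoZeroCycle) (hφ : (G.pot φ).Reduced)
    {v : V} (hv : (G.pot φ).ZN v) : G.MPval v < 0 := by
  classical
  set n := Fintype.card V with hn
  have hnpos : 0 < n := Fintype.card_pos_iff.2 ⟨v⟩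
  set C : ℤ := ∑ x : V, |φ x| with hC
  have hCb : ∀ x, |φ x| ≤ C :=
    fun x => Finset.single_le_sum (fun i _ => abs_nonneg (φ i)) (Finset.mem_univ x)
  set σ : V → V := fun u =>
    if h : ∃ u', G.E u u' ∧ (G.pot φ).w u u' ≤ 0 ∧ (G.pot φ).ZN u' then h.choose
    else (G.sinkless u).choose with hσ
  have hσP : ∀ u, (G.pot φ).ZN u → G.IsMin u →
      (G.pot φ).w u (σ u) ≤ 0 ∧ (G.pot φ).ZN (σ u) := by
    intro u hu hmin
    obtain ⟨u', -, hE, hw, hZ⟩ := (hφ.1 u hu).1 hmin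
    have h : ∃ u', G.E u u' ∧ (G.pot φ).w u u' ≤ 0 ∧ (G.pot φ).ZN u' := ⟨u', hE, hw, hZ⟩
    simp only [hσ, dif_pos h]
    exact ⟨h.choose_spec.2.1, h.choose_spec.2.2⟩
  have hleg : G.Legal σ := by
    intro u
    by_cases h : ∃ u', G.E u u' ∧ (G.pot φ).w u u' ≤ 0 ∧ (G.pot φ).ZN u'
    · simp only [hσ, dif_pos h]; exact h.choose_spec.1
    · simp only [hσ, dif_neg h]; exact (G.sinkless u).choose_spec
  have hmaxP : ∀ u, (G.pot φ).ZN u → ¬ G.IsMin u → ∀ u', G.E u u' →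
      (G.pot φ).w u u' ≤ 0 ∧ (G.pot φ).ZN u' := by
    intro u hu hmax u' hE
    exact (hφ.1 u hu).2 hmax u' (Set.mem_univ u') hE
  have hbd : ∀ π : G.Path, π.vert 0 = v → π.ConsMin σ →
      MP π ≤ ((-(1 / (2 * (n:ℝ)))) : ℝ) := by
    intro π h0 hcons
    have hZall : ∀ i, (G.pot φ).ZN (π.vert i) := by
      intro i
      induction i with
      | zero => rw [h0]; exact hv
      | succ i ih =>
        by_cases hmin : G.IsMin (π.vert i)
        · rw [hcons i hmin]; exact (hσP _ ih hmin).2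
        · exact (hmaxP _ ih hmin _ (π.adj i)).2
    have hwle : ∀ i, (G.pot φ).w (π.vert i) (π.vert (i + 1)) ≤ 0 := by
      intro i
      by_cases hmin : G.IsMin (π.vert i)
      · rw [hcons i hmin]; exact (hσP _ (hZall i) hmin).1
      · exact (hmaxP _ (hZall i) hmin _ (π.adj i)).1
    have hA : ∀ k, π.wsum k ≤ (φ v + C) - (k / n : ℕ) := by
      intro k
      have h1 := gp_bound_le φ hz π hwle k
      rw [← hn] at h1
      have h2 : gp φ π 0 = φ v := by simp [gp, Path.wsum, h0]
      have h3 : -φ (π.vert k) ≤ C := le_trans (neg_le_abs _) (hCb _)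
      have h4 : gp φ π k = π.wsum k + φ (π.vert k) := rfl
      omega
    exact MP_le_coe (ev_bound hnpos (φ v + C) π.wsum hA)
  have hc0 : ((-(1 / (2 * (n:ℝ)))) : EReal) < 0 := by
    rw [← EReal.coe_zero]
    refine EReal.coe_lt_coe_iff.2 ?_
    have hpos : (0:ℝ) < 1 / (2 * (n:ℝ)) := by positivity
    exact neg_lt_zero.2 hpos
  refine lt_of_le_of_lt ?_ hc0
  refine le_trans (iInf_le _ ⟨σ, hleg⟩) (iSup_le ?_)
  rintro ⟨π, h0, hcons⟩
  exact hbd π h0 hcons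

lemma MPval_pos_of_ZP (hz : G.NoZeroCycle) (hφ : (G.pot φ).Reduced)
    {v : V} (hv : (G.pot φ).ZP v) : 0 < G.MPval v := by
  classical
  set n := Fintype.card V with hn
  have hnpos : 0 < n := Fintype.card_pos_iff.2 ⟨v⟩
  set C : ℤ := ∑ x : V, |φ x| with hC
  have hCb : ∀ x, |φ x| ≤ C :=
    fun x => Finset.single_le_sum (fun i _ => abs_nonneg (φ i)) (Finset.mem_univ x)
  have hc0 : (0 : EReal) < (((1 / (2 * (n:ℝ)))) : ℝ) := by
    rw [← EReal.coe_zero]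
    refine EReal.coe_lt_coe_iff.2 ?_
    positivity
  refine lt_of_lt_of_le hc0 (le_iInf ?_)
  rintro ⟨σ, hleg⟩
  set F : V → V := fun u =>
    if G.IsMin u then σ u
    else if h : ∃ u', G.E u u' ∧ 0 ≤ (G.pot φ).w u u' ∧ (G.pot φ).ZP u' then h.choose
    else (G.sinkless u).choose with hF
  have hFmin : ∀ u, G.IsMin u → F u = σ u := by
    intro u hm; simp only [hF, if_pos hm]
  have hFmax : ∀ u, (G.pot φ).ZP u → ¬ G.IsMin u →
      G.E u (F u) ∧ 0 ≤ (G.pot φ).w u (F u) ∧ (G.pot φ).ZP (F u) := by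
    intro u hu hmax
    obtain ⟨u', -, hE, hw, hZ⟩ := (hφ.2 u hu).1 hmax
    have h : ∃ u', G.E u u' ∧ 0 ≤ (G.pot φ).w u u' ∧ (G.pot φ).ZP u' := ⟨u', hE, hw, hZ⟩
    simp only [hF, if_neg hmax, dif_pos h]
    exact h.choose_spec
  have hminP : ∀ u, (G.pot φ).ZP u → G.IsMin u → ∀ u', G.E u u' →
      0 ≤ (G.pot φ).w u u' ∧ (G.pot φ).ZP u' := by
    intro u hu hmin u' hE
    exact (hφ.2 u hu).2 hmin u' (Set.mem_univ u') hE
  have hFE : ∀ u, G.E u (F u) := by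
    intro u
    by_cases hm : G.IsMin u
    · rw [hFmin u hm]; exact hleg u
    · by_cases h : ∃ u', G.E u u' ∧ 0 ≤ (G.pot φ).w u u' ∧ (G.pot φ).ZP u'
      · simp only [hF, if_neg hm, dif_pos h]; exact h.choose_spec.1
      · simp only [hF, if_neg hm, dif_neg h]; exact (G.sinkless u).choose_spec
  let π : G.Path :=
    ⟨fun i => F^[i] v, fun i => by
      show G.E (F^[i] v) (F^[i+1] v)
      rw [Function.iterate_succ_apply']
      exact hFE _⟩
  have hvert : ∀ i, π.vert (i + 1) = F (π.vert i) := by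
    intro i
    show F^[i+1] v = F (F^[i] v)
    exact Function.iterate_succ_apply' F i v
  have h0 : π.vert 0 = v := rfl
  have hcons : π.ConsMin σ := by
    intro i hmin
    rw [hvert i, hFmin _ hmin]
  have hZall : ∀ i, (G.pot φ).ZP (π.vert i) := by
    intro i
    induction i with
    | zero => rw [h0]; exact hv
    | succ i ih =>
      rw [hvert i]
      by_cases hmin : G.IsMin (π.vert i)
      · rw [hFmin _ hmin]
        exact (hminP _ ih hmin _ (hleg _)).2
      · exact (hFmax _ ih hmin).2.2
  have hwge : ∀ i, 0 ≤ (G.pot φ).w (π.vert i) (π.vert (i + 1)) := by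
    intro i
    rw [hvert i]
    by_cases hmin : G.IsMin (π.vert i)
    · rw [hFmin _ hmin]
      exact (hminP _ (hZall i) hmin _ (hleg _)).1
    · exact (hFmax _ (hZall i) hmin).2.1
  have hA : ∀ k, -π.wsum k ≤ (C - φ v) - (k / n : ℕ) := by
    intro k
    have h1 := gp_bound_ge φ hz π hwge k
    rw [← hn] at h1
    have h2 : gp φ π 0 = φ v := by simp [gp, Path.wsum, h0]
    have h3 : φ (π.vert k) ≤ C := le_trans (le_abs_self _) (hCb _)
    have h4 : gp φ π k = π.wsum k + φ (π.vert k) := rfl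
    omega
  have hev := ev_bound hnpos (C - φ v) (fun k => -π.wsum k) hA
  have hev2 : ∀ᶠ k in Filter.atTop, (1 / (2 * (n:ℝ))) ≤ (π.wsum k : ℝ) / k := by
    filter_upwards [hev] with k hk
    push_cast at hk
    rw [neg_div] at hk
    linarith
  exact le_trans (coe_le_MP hev2)
    (le_iSup (fun π : {π : G.Path // π.vert 0 = v ∧ π.ConsMin σ} => MP π.1) ⟨π, h0, hcons⟩)

lemma no_zero_loop (hz : G.NoZeroCycle) (S : Set V)
    (hS : ∀ u ∈ S, ∃ u', u' ∈ S ∧ G.E u u' ∧ (G.pot φ).w u u' = 0)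
    {v : V} (hv : v ∈ S) : False := by
  classical
  have hstep : ∀ x : {x // x ∈ S}, ∃ y : {y // y ∈ S},
      G.E x.1 y.1 ∧ (G.pot φ).w x.1 y.1 = 0 := by
    rintro ⟨u, hu⟩
    obtain ⟨u', hu', hE, hw⟩ := hS u hu
    exact ⟨⟨u', hu'⟩, hE, hw⟩
  choose F hF1 hF2 using hstep
  set u : ℕ → {x // x ∈ S} := fun i => F^[i] ⟨v, hv⟩ with hu
  have hsucc : ∀ i, u (i + 1) = F (u i) := fun i => Function.iterate_succ_apply' F i _
  let π : G.Path := ⟨fun i => (u i).1, fun i => by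
    show G.E (u i).1 (u (i + 1)).1
    rw [hsucc i]
    exact hF1 (u i)⟩
  have hw0 : ∀ i, (G.pot φ).w (π.vert i) (π.vert (i + 1)) = 0 := by
    intro i
    show (G.pot φ).w (u i).1 (u (i + 1)).1 = 0
    rw [hsucc i]
    exact hF2 (u i)
  have hgc : ∀ k, gp φ π k = gp φ π 0 := by
    intro k
    induction k with
    | zero => rfl
    | succ k ih => rw [gp_succ, hw0 k, add_zero, ih]
  obtain ⟨i, j, hne, heq⟩ := Finite.exists_ne_map_eq_of_infinite π.vert
  rcases hne.lt_or_gt with h | h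
  · exact gp_ne φ hz π h heq (by rw [hgc i, hgc j])
  · exact gp_ne φ hz π h heq.symm (by rw [hgc i, hgc j])

lemma ZN_or_ZP (hz : G.NoZeroCycle) (hφ : (G.pot φ).Reduced) (v : V) :
    (G.pot φ).ZN v ∨ (G.pot φ).ZP v := by
  by_contra hcon
  push_neg at hcon
  refine no_zero_loop φ hz {u | ¬ (G.pot φ).ZN u ∧ ¬ (G.pot φ).ZP u} ?_ hcon
  rintro u ⟨huN, huP⟩
  by_cases hm : G.IsMin u
  · have hge : ∀ u', G.E u u' → 0 ≤ (G.pot φ).w u u' := by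
      intro u' hE
      by_contra hlt
      exact huN (ZNr.minNeg u u' (Set.mem_univ u) hm (Set.mem_univ u') hE (not_le.mp hlt))
    have hzn : ∀ u', G.E u u' → (G.pot φ).w u u' = 0 → ¬ (G.pot φ).ZN u' :=
      fun u' hE h0 hz' =>
        huN (ZNr.minZero u u' (Set.mem_univ u) hm (Set.mem_univ u') hE h0 hz')
    have hnall : ¬ ∀ u', u' ∈ (Set.univ : Set V) → (G.pot φ).E u u' →
        (G.pot φ).w u u' = 0 → (G.pot φ).ZPr Set.univ u' := by
      intro hall
      exact huP (ZPr.min u (Set.mem_univ u) hm (fun u' _ hE => hge u' hE) hall)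
    push_neg at hnall
    obtain ⟨u', -, hE, h0, hnp⟩ := hnall
    exact ⟨u', ⟨hzn u' hE h0, hnp⟩, hE, h0⟩
  · have hle : ∀ u', G.E u u' → (G.pot φ).w u u' ≤ 0 := by
      intro u' hE
      by_contra hlt
      exact huP (ZPr.maxPos u u' (Set.mem_univ u) hm (Set.mem_univ u') hE (not_le.mp hlt))
    have hzp : ∀ u', G.E u u' → (G.pot φ).w u u' = 0 → ¬ (G.pot φ).ZP u' :=
      fun u' hE h0 hp' =>
        huP (ZPr.maxZero u u' (Set.mem_univ u) hm (Set.mem_univ u') hE h0 hp')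
    have hnall : ¬ ∀ u', u' ∈ (Set.univ : Set V) → (G.pot φ).E u u' →
        (G.pot φ).w u u' = 0 → (G.pot φ).ZNr Set.univ u' := by
      intro hall
      exact huN (ZNr.max u (Set.mem_univ u) hm (fun u' _ hE => hle u' hE) hall)
    push_neg at hnall
    obtain ⟨u', -, hE, h0, hnn⟩ := hnall
    exact ⟨u', ⟨hnn, hzp u' hE h0⟩, hE, h0⟩

end MPGame
end Aux

open MPGame in
/-- for any reducing potential `φ` of a finite game `G` with
no zero cycle, `ZN_φ` is exactly the set of vertices of MP-value `< 0` and
`ZP_φ` is exactly the set of vertices of MP-value `> 0`; in particular the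
partition is independent of the choice of `φ`. -/
theorem statement3 {V : Type*} [Fintype V] (G : MPGame V)
    (hz : G.NoZeroCycle) (φ : V → ℤ) (hφ : (G.pot φ).Reduced) :
    (∀ v, (G.pot φ).ZN v ↔ G.MPval v < 0) ∧
    (∀ v, (G.pot φ).ZP v ↔ 0 < G.MPval v) := by
  constructor
  · intro v
    constructor
    · exact fun h => MPval_neg_of_ZN φ hz hφ h
    · intro h
      rcases ZN_or_ZP φ hz hφ v with h1 | h1
      · exact h1
      · exact absurd h (MPval_pos_of_ZP φ hz hφ h1).asymm
  · intro v
    constructor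
    · exact fun h => MPval_pos_of_ZP φ hz hφ h
    · intro h
      rcases ZN_or_ZP φ hz hφ v with h1 | h1
      · exact absurd (MPval_neg_of_ZN φ hz hφ h1) h.asymm
      · exact h1
end

section
/- In a reduced game with no cycle of total weight zero, every vertex of ZN has MP-value < 0 and every vertex of ZP has MP-value > 0; moreover, from ZN Min has a positional strategy ensuring that the play stays forever in ZN and visits only edges of weight ≤ 0 (in particular ZN is a trap for Max), and symmetrically for ZP and Max. -/
namespace MPGame

variable {V : Type*}

lemma Path.wsum_succ {G : MPGame V} (π : G.Path) (k : ℕ) :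
    π.wsum (k + 1) = π.wsum k + G.w (π.vert k) (π.vert (k + 1)) :=
  Finset.sum_range_succ _ _

lemma wsum_anti {G : MPGame V} (π : G.Path)
    (hw : ∀ i, G.w (π.vert i) (π.vert (i + 1)) ≤ 0) :
    ∀ {i j : ℕ}, i ≤ j → π.wsum j ≤ π.wsum i := by
  intro i j hij
  induction j with
  | zero => simp_all
  | succ j ih =>
    rcases Nat.lt_succ_iff_lt_or_eq.mp (Nat.lt_succ_of_le hij) with h | h
    · calc π.wsum (j+1) = π.wsum j + _ := π.wsum_succ j
        _ ≤ π.wsum j := by have := hw j; omega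
        _ ≤ π.wsum i := ih (Nat.lt_succ_iff.mp h)
    · simp [h]  -- i = j+1? h : i = j+1

lemma exists_repeat [Fintype V] (f : ℕ → V) (a : ℕ) :
    ∃ i j, a ≤ i ∧ i < j ∧ j ≤ a + Fintype.card V ∧ f i = f j := by
  have := Finset.exists_ne_map_eq_of_card_lt_of_maps_to
    (s := Finset.Icc a (a + Fintype.card V)) (t := Finset.univ) (f := f)
    (by simp [Nat.card_Icc]; omega) (fun x _ => Finset.mem_univ _)
  obtain ⟨x, hx, y, hy, hxy, hfxy⟩ := this
  simp only [Finset.mem_Icc] at hx hy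
  rcases lt_or_gt_of_ne hxy with h | h
  · exact ⟨x, y, hx.1, h, hy.2, hfxy⟩
  · exact ⟨y, x, hy.1, h, hx.2, hfxy.symm⟩

lemma wsum_le_neg [Fintype V] {G : MPGame V} (hz : G.NoZeroCycle) (π : G.Path)
    (hw : ∀ i, G.w (π.vert i) (π.vert (i + 1)) ≤ 0) (m : ℕ) :
    π.wsum (m * (Fintype.card V + 1)) ≤ -m := by
  set N := Fintype.card V + 1 with hN
  induction m with
  | zero => simp [Path.wsum]
  | succ m ih =>
    obtain ⟨i, j, hi, hij, hj, hfij⟩ := exists_repeat π.vert (m * N)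
    have hne := hz π i j hij hfij
    have h1 : π.wsum j ≤ π.wsum i := wsum_anti π hw hij.le
    have h2 : π.wsum i ≤ π.wsum (m * N) := wsum_anti π hw hi
    have hNN : (m+1) * N = m * N + N := by ring
    have h3 : π.wsum ((m+1) * N) ≤ π.wsum j := by
      apply wsum_anti π hw; omega
    push_cast; omega

lemma MP_le_neg [Fintype V] {G : MPGame V} (hz : G.NoZeroCycle) (π : G.Path)
    (hw : ∀ i, G.w (π.vert i) (π.vert (i + 1)) ≤ 0) :
    MP π ≤ ((-(1 / (2 * (Fintype.card V + 1))) : ℝ) : EReal) := by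
  set N := Fintype.card V + 1 with hN
  have hNpos : 0 < N := by omega
  refine Filter.limsup_le_of_le (by isBoundedDefault) ?_
  filter_upwards [Filter.eventually_ge_atTop (2 * N)] with k hk
  rw [show ((π.wsum k : ℝ) : EReal) / ((k : ℝ) : EReal)
      = (((π.wsum k : ℝ) / (k : ℝ) : ℝ) : EReal) from (EReal.coe_div _ _).symm,
    EReal.coe_le_coe_iff]
  set m := k / N with hm
  have hmN : m * N ≤ k := Nat.div_mul_le_self k N
  have hm2 : 2 ≤ m := (Nat.le_div_iff_mul_le hNpos).mpr hk
  have hmod : k % N < N := Nat.mod_lt k hNpos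
  have hdm : N * m + k % N = k := by rw [hm]; exact Nat.div_add_mod k N
  have hcomm : N * m = m * N := by ring
  have hk2 : k ≤ 2 * m * N := by
    have h1 : (m + 1) * N ≤ 2 * m * N := Nat.mul_le_mul_right N (by omega)
    have h2 : (m + 1) * N = m * N + N := by ring
    omega
  have hsum : π.wsum k ≤ -(m : ℤ) := by
    calc π.wsum k ≤ π.wsum (m * N) := wsum_anti π hw hmN
      _ ≤ -(m : ℤ) := wsum_le_neg hz π hw m
  have hk0 : (0 : ℝ) < k := by exact_mod_cast (show 0 < k by omega)
  have hNR : (0 : ℝ) < (N : ℝ) := by exact_mod_cast hNpos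
  rw [div_le_iff₀ hk0]
  have hk2R : (k : ℝ) ≤ 2 * (m : ℝ) * N := by exact_mod_cast hk2
  have hsR : (π.wsum k : ℝ) ≤ -(m : ℝ) := by exact_mod_cast hsum
  have e : (1 / (2 * (N : ℝ))) * (2 * (m : ℝ) * N) = m := by field_simp
  calc (π.wsum k : ℝ) ≤ -(m : ℝ) := hsR
    _ = -((1 / (2 * (N : ℝ))) * (2 * (m : ℝ) * N)) := by rw [e]
    _ ≤ -((1 / (2 * (N : ℝ))) * k) := by
        apply neg_le_neg
        apply mul_le_mul_of_nonneg_left hk2R (by positivity)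
    _ = -(1 / (2 * ((Fintype.card V : ℝ) + 1))) * k := by
        rw [hN]; push_cast; ring

lemma wsum_mono {G : MPGame V} (π : G.Path)
    (hw : ∀ i, 0 ≤ G.w (π.vert i) (π.vert (i + 1))) :
    ∀ {i j : ℕ}, i ≤ j → π.wsum i ≤ π.wsum j := by
  intro i j hij
  induction j with
  | zero => simp_all
  | succ j ih =>
    rcases Nat.lt_succ_iff_lt_or_eq.mp (Nat.lt_succ_of_le hij) with h | h
    · calc π.wsum i ≤ π.wsum j := ih (Nat.lt_succ_iff.mp h)
        _ ≤ π.wsum (j+1) := by rw [π.wsum_succ j]; have := hw j; omega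
    · simp [h]

lemma wsum_ge_pos [Fintype V] {G : MPGame V} (hz : G.NoZeroCycle) (π : G.Path)
    (hw : ∀ i, 0 ≤ G.w (π.vert i) (π.vert (i + 1))) (m : ℕ) :
    (m : ℤ) ≤ π.wsum (m * (Fintype.card V + 1)) := by
  set N := Fintype.card V + 1 with hN
  induction m with
  | zero => simp [Path.wsum]
  | succ m ih =>
    obtain ⟨i, j, hi, hij, hj, hfij⟩ := exists_repeat π.vert (m * N)
    have hne := hz π i j hij hfij
    have h1 : π.wsum i ≤ π.wsum j := wsum_mono π hw hij.le
    have h2 : π.wsum (m * N) ≤ π.wsum i := wsum_mono π hw hi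
    have hNN : (m+1) * N = m * N + N := by ring
    have h3 : π.wsum j ≤ π.wsum ((m+1) * N) := by
      apply wsum_mono π hw; omega
    push_cast; omega

lemma MP_ge_pos [Fintype V] {G : MPGame V} (hz : G.NoZeroCycle) (π : G.Path)
    (hw : ∀ i, 0 ≤ G.w (π.vert i) (π.vert (i + 1))) :
    (((1 / (2 * (Fintype.card V + 1))) : ℝ) : EReal) ≤ MP π := by
  set N := Fintype.card V + 1 with hN
  have hNpos : 0 < N := by omega
  refine Filter.le_limsup_of_frequently_le ?_ (by isBoundedDefault)
  apply Filter.Eventually.frequently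
  filter_upwards [Filter.eventually_ge_atTop (2 * N)] with k hk
  rw [show ((π.wsum k : ℝ) : EReal) / ((k : ℝ) : EReal)
      = (((π.wsum k : ℝ) / (k : ℝ) : ℝ) : EReal) from (EReal.coe_div _ _).symm,
    EReal.coe_le_coe_iff]
  set m := k / N with hm
  have hmN : m * N ≤ k := Nat.div_mul_le_self k N
  have hm2 : 2 ≤ m := (Nat.le_div_iff_mul_le hNpos).mpr hk
  have hmod : k % N < N := Nat.mod_lt k hNpos
  have hdm : N * m + k % N = k := by rw [hm]; exact Nat.div_add_mod k N
  have hcomm : N * m = m * N := by ring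
  have hk2 : k ≤ 2 * m * N := by
    have h1 : (m + 1) * N ≤ 2 * m * N := Nat.mul_le_mul_right N (by omega)
    have h2 : (m + 1) * N = m * N + N := by ring
    omega
  have hsum : (m : ℤ) ≤ π.wsum k := by
    calc (m : ℤ) ≤ π.wsum (m * N) := wsum_ge_pos hz π hw m
      _ ≤ π.wsum k := wsum_mono π hw hmN
  have hk0 : (0 : ℝ) < k := by exact_mod_cast (show 0 < k by omega)
  have hNR : (0 : ℝ) < (N : ℝ) := by exact_mod_cast hNpos
  rw [le_div_iff₀ hk0]
  have hk2R : (k : ℝ) ≤ 2 * (m : ℝ) * N := by exact_mod_cast hk2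
  have hsR : (m : ℝ) ≤ (π.wsum k : ℝ) := by exact_mod_cast hsum
  have e : (1 / (2 * (N : ℝ))) * (2 * (m : ℝ) * N) = m := by field_simp
  calc (1 / (2 * ((Fintype.card V : ℝ) + 1))) * k
      = (1 / (2 * (N : ℝ))) * k := by rw [hN]; push_cast; ring
    _ ≤ (1 / (2 * (N : ℝ))) * (2 * (m : ℝ) * N) :=
        mul_le_mul_of_nonneg_left hk2R (by positivity)
    _ = m := e
    _ ≤ (π.wsum k : ℝ) := hsR


open Classical in
/-- Min's positional strategy: at Min-vertices of ZN, follow the reduced witness. -/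
noncomputable def minStrat (G : MPGame V) (hred : G.Reduced) : V → V :=
  fun v => if h : G.ZNr Set.univ v ∧ G.IsMin v then
      Classical.choose ((hred.1 v h.1).1 h.2)
    else Classical.choose (G.sinkless v)

lemma minStrat_legal (G : MPGame V) (hred : G.Reduced) : G.Legal (minStrat G hred) := by
  intro v
  unfold minStrat
  split
  · next h => exact (Classical.choose_spec ((hred.1 v h.1).1 h.2)).2.1
  · exact Classical.choose_spec (G.sinkless v)

lemma minStrat_spec (G : MPGame V) (hred : G.Reduced) {v : V}
    (hv : G.ZNr Set.univ v) (hm : G.IsMin v) :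
    G.w v (minStrat G hred v) ≤ 0 ∧ G.ZNr Set.univ (minStrat G hred v) := by
  unfold minStrat
  rw [dif_pos ⟨hv, hm⟩]
  exact ⟨(Classical.choose_spec ((hred.1 v hv).1 hm)).2.2.1,
    (Classical.choose_spec ((hred.1 v hv).1 hm)).2.2.2⟩

lemma ZN_step (G : MPGame V) (hred : G.Reduced) (π : G.Path)
    (hc : π.ConsMin (minStrat G hred)) (i : ℕ) (h : G.ZNr Set.univ (π.vert i)) :
    G.ZNr Set.univ (π.vert (i + 1)) ∧ G.w (π.vert i) (π.vert (i + 1)) ≤ 0 := by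
  by_cases hm : G.IsMin (π.vert i)
  · rw [hc i hm]
    have := minStrat_spec G hred h hm
    exact ⟨this.2, this.1⟩
  · have := (hred.1 _ h).2 hm (π.vert (i+1)) (Set.mem_univ _) (π.adj i)
    exact ⟨this.2, this.1⟩

lemma ZN_invariant (G : MPGame V) (hred : G.Reduced) (π : G.Path)
    (hc : π.ConsMin (minStrat G hred)) (h0 : G.ZNr Set.univ (π.vert 0)) :
    ∀ i, G.ZNr Set.univ (π.vert i) ∧ G.w (π.vert i) (π.vert (i + 1)) ≤ 0 := by
  have hz : ∀ i, G.ZNr Set.univ (π.vert i) := by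
    intro i
    induction i with
    | zero => exact h0
    | succ i ih => exact (ZN_step G hred π hc i ih).1
  exact fun i => ⟨hz i, (ZN_step G hred π hc i (hz i)).2⟩

open Classical in
/-- Max's positional strategy: at Max-vertices of ZP, follow the reduced witness. -/
noncomputable def maxStrat (G : MPGame V) (hred : G.Reduced) : V → V :=
  fun v => if h : G.ZPr Set.univ v ∧ ¬ G.IsMin v then
      Classical.choose ((hred.2 v h.1).1 h.2)
    else Classical.choose (G.sinkless v)

lemma maxStrat_legal (G : MPGame V) (hred : G.Reduced) : G.Legal (maxStrat G hred) := by
  intro v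
  unfold maxStrat
  split
  · next h => exact (Classical.choose_spec ((hred.2 v h.1).1 h.2)).2.1
  · exact Classical.choose_spec (G.sinkless v)

lemma maxStrat_spec (G : MPGame V) (hred : G.Reduced) {v : V}
    (hv : G.ZPr Set.univ v) (hm : ¬ G.IsMin v) :
    0 ≤ G.w v (maxStrat G hred v) ∧ G.ZPr Set.univ (maxStrat G hred v) := by
  unfold maxStrat
  rw [dif_pos ⟨hv, hm⟩]
  exact ⟨(Classical.choose_spec ((hred.2 v hv).1 hm)).2.2.1,
    (Classical.choose_spec ((hred.2 v hv).1 hm)).2.2.2⟩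

lemma ZP_step (G : MPGame V) (hred : G.Reduced) (π : G.Path)
    (hc : π.ConsMax (maxStrat G hred)) (i : ℕ) (h : G.ZPr Set.univ (π.vert i)) :
    G.ZPr Set.univ (π.vert (i + 1)) ∧ 0 ≤ G.w (π.vert i) (π.vert (i + 1)) := by
  by_cases hm : G.IsMin (π.vert i)
  · have := (hred.2 _ h).2 hm (π.vert (i+1)) (Set.mem_univ _) (π.adj i)
    exact ⟨this.2, this.1⟩
  · rw [hc i hm]
    have := maxStrat_spec G hred h hm
    exact ⟨this.2, this.1⟩

lemma ZP_invariant (G : MPGame V) (hred : G.Reduced) (π : G.Path)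
    (hc : π.ConsMax (maxStrat G hred)) (h0 : G.ZPr Set.univ (π.vert 0)) :
    ∀ i, G.ZPr Set.univ (π.vert i) ∧ 0 ≤ G.w (π.vert i) (π.vert (i + 1)) := by
  have hz : ∀ i, G.ZPr Set.univ (π.vert i) := by
    intro i
    induction i with
    | zero => exact h0
    | succ i ih => exact (ZP_step G hred π hc i ih).1
  exact fun i => ⟨hz i, (ZP_step G hred π hc i (hz i)).2⟩

open Classical in
/-- Given any Min strategy `σ`, a joint next-vertex function staying in ZP. -/
noncomputable def zpStrat (G : MPGame V) (hred : G.Reduced) (σ : V → V) : V → V :=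
  fun u => if hm : G.IsMin u then σ u
    else if h : G.ZPr Set.univ u then Classical.choose ((hred.2 u h).1 hm)
    else Classical.choose (G.sinkless u)

lemma zpStrat_legal (G : MPGame V) (hred : G.Reduced) {σ : V → V} (hσ : G.Legal σ) :
    G.Legal (zpStrat G hred σ) := by
  intro u
  unfold zpStrat
  split
  · exact hσ u
  · split
    · next hm h => exact (Classical.choose_spec ((hred.2 u h).1 hm)).2.1
    · exact Classical.choose_spec (G.sinkless u)

lemma zpStrat_spec (G : MPGame V) (hred : G.Reduced) {σ : V → V} (hσ : G.Legal σ)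
    {u : V} (hu : G.ZPr Set.univ u) :
    G.ZPr Set.univ (zpStrat G hred σ u) ∧ 0 ≤ G.w u (zpStrat G hred σ u) := by
  unfold zpStrat
  by_cases hm : G.IsMin u
  · rw [dif_pos hm]
    have := (hred.2 u hu).2 hm (σ u) (Set.mem_univ _) (hσ u)
    exact ⟨this.2, this.1⟩
  · rw [dif_neg hm, dif_pos hu]
    exact ⟨(Classical.choose_spec ((hred.2 u hu).1 hm)).2.2.2,
      (Classical.choose_spec ((hred.2 u hu).1 hm)).2.2.1⟩

end MPGame

open MPGame in
/-- in a reduced game with no zero cycle, every vertex of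
`ZN` has MP-value `< 0` and every vertex of `ZP` has MP-value `> 0`;
moreover Min has a positional strategy which, from `ZN`, keeps the play in
`ZN` forever visiting only edges of weight `≤ 0` (in particular `ZN` is a
trap for Max), and symmetrically for `ZP` and Max. -/
theorem statement4 {V : Type*} [Fintype V] (G : MPGame V)
    (hz : G.NoZeroCycle) (hred : G.Reduced) :
    (∀ v, G.ZN v → G.MPval v < 0) ∧
    (∀ v, G.ZP v → 0 < G.MPval v) ∧
    (∃ σ : V → V, G.Legal σ ∧ ∀ π : G.Path, π.ConsMin σ → G.ZN (π.vert 0) →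
      ∀ i, G.ZN (π.vert i) ∧ G.w (π.vert i) (π.vert (i + 1)) ≤ 0) ∧
    (∃ τ : V → V, G.Legal τ ∧ ∀ π : G.Path, π.ConsMax τ → G.ZP (π.vert 0) →
      ∀ i, G.ZP (π.vert i) ∧ 0 ≤ G.w (π.vert i) (π.vert (i + 1))) ∧
    G.TrapForMax {v | G.ZN v} ∧ G.TrapForMin {v | G.ZP v} := by
  have hcpos : (0:ℝ) < 1 / (2 * ((Fintype.card V : ℝ) + 1)) := by positivity
  refine ⟨?_, ?_, ?_, ?_, ?_, ?_⟩
  · -- ZN vertices have negative value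
    intro v hv
    have h1 : G.MPval v ≤ ((-(1 / (2 * ((Fintype.card V : ℝ) + 1))) : ℝ) : EReal) := by
      unfold MPval minVal
      refine le_trans (iInf_le _ ⟨minStrat G hred, minStrat_legal G hred⟩) ?_
      refine iSup_le ?_
      rintro ⟨π, h0, hcons⟩
      have h0' : G.ZNr Set.univ (π.vert 0) := by rw [h0]; exact hv
      exact MP_le_neg hz π (fun i => (ZN_invariant G hred π hcons h0' i).2)
    refine lt_of_le_of_lt h1 ?_
    rw [← EReal.coe_zero, EReal.coe_lt_coe_iff]
    linarith
  · -- ZP vertices have positive value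
    intro v hv
    have h1 : (((1 / (2 * ((Fintype.card V : ℝ) + 1))) : ℝ) : EReal) ≤ G.MPval v := by
      unfold MPval minVal
      refine le_iInf ?_
      rintro ⟨σ, hσ⟩
      set f := zpStrat G hred σ with hf
      have hleg : G.Legal f := zpStrat_legal G hred hσ
      have hzp : ∀ i, G.ZPr Set.univ (f^[i] v) := by
        intro i
        induction i with
        | zero => exact hv
        | succ i ih =>
          rw [Function.iterate_succ_apply']
          exact (zpStrat_spec G hred hσ ih).1
      have hadj : ∀ i, G.E (f^[i] v) (f^[i+1] v) := by
        intro i; rw [Function.iterate_succ_apply']; exact hleg _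
      let π : G.Path := ⟨fun i => f^[i] v, hadj⟩
      have hw : ∀ i, 0 ≤ G.w (π.vert i) (π.vert (i+1)) := by
        intro i
        show 0 ≤ G.w (f^[i] v) (f^[i+1] v)
        rw [Function.iterate_succ_apply']
        exact (zpStrat_spec G hred hσ (hzp i)).2
      have hcons : π.ConsMin σ := by
        intro i hm
        show f^[i+1] v = σ (f^[i] v)
        rw [Function.iterate_succ_apply']
        show zpStrat G hred σ _ = _
        unfold zpStrat
        rw [dif_pos hm]
      exact le_iSup_of_le ⟨π, rfl, hcons⟩ (MP_ge_pos hz π hw)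
    refine lt_of_lt_of_le ?_ h1
    rw [← EReal.coe_zero, EReal.coe_lt_coe_iff]
    exact hcpos
  · -- Min's strategy on ZN
    exact ⟨minStrat G hred, minStrat_legal G hred,
      fun π hcons h0 => ZN_invariant G hred π hcons h0⟩
  · -- Max's strategy on ZP
    exact ⟨maxStrat G hred, maxStrat_legal G hred,
      fun π hcons h0 => ZP_invariant G hred π hcons h0⟩
  · -- ZN is a trap for Max
    constructor
    · intro v hv
      by_cases hm : G.IsMin v
      · obtain ⟨v', -, hE, -, hZ⟩ := (hred.1 v hv).1 hm
        exact ⟨v', hZ, hE⟩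
      · obtain ⟨v', hE⟩ := G.sinkless v
        exact ⟨v', ((hred.1 v hv).2 hm v' (Set.mem_univ _) hE).2, hE⟩
    · intro v hv hm v' hE
      exact ((hred.1 v hv).2 hm v' (Set.mem_univ _) hE).2
  · -- ZP is a trap for Min
    constructor
    · intro v hv
      by_cases hm : G.IsMin v
      · obtain ⟨v', hE⟩ := G.sinkless v
        exact ⟨v', ((hred.2 v hv).2 hm v' (Set.mem_univ _) hE).2, hE⟩
      · obtain ⟨v', -, hE, -, hZ⟩ := (hred.2 v hv).1 hm
        exact ⟨v', hZ, hE⟩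
    · intro v hv hm v' hE
      exact ((hred.2 v hv).2 hm v' (Set.mem_univ _) hE).2
end
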